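/- arXiv:1803.05878 — 4 statements merged into one kernel-verified Lean document; each statement's English description precedes it below -/
import Mathlib

section
/- The Laplace transform of a lognormal random variable X ~ lnN(μ,σ²), defined on the closed right half-plane by φ(z) = ∫₀^∞ e^{-zx} f(x;μ,σ) dx, extends analytically to ℂ \ (-∞,0] via the formula φ(z) = (2πσ²)^{-1/2} exp(-(μ + Log z)²/(2σ²)) · Φ(1, μ + Log z; σ), where Φ(1,w;σ) = ∫₀^∞ x^{-1} exp(-x - (ln x)²/(2σ²) + (w/σ²) ln x) dx and Log is the principal complex logarithm. That is, the right-hand side is holomorphic on ℂ \ (-∞,0] and agrees with φ(z) for Re(z) > 0. -/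
set_option maxHeartbeats 1000000


open MeasureTheory Complex Set

/-- The lognormal density. -/
noncomputable def lognormalDensity (μ σ : ℝ) (x : ℝ) : ℝ :=
  (Real.sqrt (2 * Real.pi) * σ * x)⁻¹ * Real.exp (-(Real.log x - μ)^2 / (2 * σ^2))

/-- Φ(1,w;σ) = ∫₀^∞ x⁻¹ exp(-x - (ln x)²/(2σ²) + (w/σ²) ln x) dx. -/
noncomputable def PhiOne (σ : ℝ) (w : ℂ) : ℂ :=
  ∫ x : ℝ in Ioi 0, (x : ℂ)⁻¹ *
    Complex.exp (-(x:ℂ) - (Real.log x)^2 / (2 * σ^2) + (w / (σ:ℂ)^2) * Real.log x)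

open Real Filter Topology


lemma integrableOn_Ioi_comp_log {h : ℝ → ℝ} (hi : Integrable h) :
    IntegrableOn (fun x => h (Real.log x) * x⁻¹) (Ioi 0) := by
  have himg : Real.exp '' univ = Ioi 0 := by
    rw [image_univ, Real.range_exp]
  have key := (integrableOn_image_iff_integrableOn_abs_deriv_smul (f := Real.exp)
    (f' := Real.exp) MeasurableSet.univ
    (fun x _ => (Real.hasDerivAt_exp x).hasDerivWithinAt)
    (Real.exp_injective.injOn) (fun x => h (Real.log x) * x⁻¹))
  rw [himg] at key
  rw [key]
  apply (hi.congr ?_).integrableOn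
  filter_upwards with t
  rw [Real.log_exp, smul_eq_mul, abs_of_pos (Real.exp_pos t)]
  field_simp

lemma integrable_gauss_lin (b a : ℝ) (hb : 0 < b) (k : ℕ) :
    Integrable (fun t : ℝ => |t| ^ k * Real.exp (-(b * t ^ 2) + a * |t|)) := by
  have base : Integrable (fun t : ℝ => Real.exp (a ^ 2 / (2 * b)) *
      (|t| ^ k * Real.exp (-(b/2) * t ^ 2))) := by
    apply Integrable.const_mul
    have h0 : Integrable (fun t : ℝ => t ^ k * Real.exp (-(b/2) * t ^ 2)) := by
      simpa [Real.rpow_natCast] using integrable_rpow_mul_exp_neg_mul_sq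
        (half_pos hb) (lt_of_lt_of_le neg_one_lt_zero (Nat.cast_nonneg k))
    apply h0.abs.congr
    filter_upwards with t
    rw [abs_mul, _root_.abs_pow, _root_.abs_of_pos (Real.exp_pos _)]
  apply base.mono' ?_ ?_
  · exact (((measurable_id.abs.pow_const k).mul
      (((measurable_id.pow_const 2).const_mul b).neg.add
        (measurable_id.abs.const_mul a)).exp)).aestronglyMeasurable
  · filter_upwards with t
    have hnn : (0:ℝ) ≤ |t| ^ k * Real.exp (-(b * t ^ 2) + a * |t|) := by positivity
    rw [Real.norm_eq_abs, _root_.abs_of_nonneg hnn]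
    have h1 : -(b * t ^ 2) + a * |t| ≤ -(b/2) * t ^ 2 + a ^ 2 / (2 * b) := by
      have hc : 2 * b * (a ^ 2 / (2 * b)) = a ^ 2 := by field_simp
      nlinarith [sq_nonneg (b * |t| - a), _root_.sq_abs t, hc, mul_pos hb hb]
    calc |t| ^ k * Real.exp (-(b * t ^ 2) + a * |t|)
        ≤ |t| ^ k * Real.exp (-(b/2) * t ^ 2 + a ^ 2 / (2 * b)) := by
          gcongr
      _ = Real.exp (a ^ 2 / (2 * b)) * (|t| ^ k * Real.exp (-(b/2) * t ^ 2)) := by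
          rw [Real.exp_add]; ring


noncomputable def Kern (σ : ℝ) (w : ℂ) (x : ℝ) : ℂ :=
  (x : ℂ)⁻¹ *
    Complex.exp (-(x:ℂ) - (Real.log x)^2 / (2 * σ^2) + (w / (σ:ℂ)^2) * Real.log x)

lemma norm_Kern {σ : ℝ} (hσ : 0 < σ) (w : ℂ) {x : ℝ} (hx : 0 < x) :
    ‖Kern σ w x‖ = x⁻¹ * Real.exp (-x - (Real.log x)^2 / (2*σ^2)
      + w.re * (Real.log x / σ^2)) := by
  have harg : (-(x:ℂ) - (Real.log x)^2 / (2 * (σ:ℂ)^2) + (w / (σ:ℂ)^2) * Real.log x)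
      = ((-x - (Real.log x)^2/(2*σ^2) : ℝ) : ℂ) + w * ((Real.log x / σ^2 : ℝ) : ℂ) := by
    have hσ' : ((σ:ℂ))^2 ≠ 0 := by
      simpa using pow_ne_zero 2 (Complex.ofReal_ne_zero.mpr hσ.ne')
    push_cast
    field_simp
  simp only [Kern]
  rw [harg]
  simp only [norm_mul, Complex.norm_exp, norm_inv, Complex.norm_real, Real.norm_eq_abs]
  rw [_root_.abs_of_pos hx]
  rw [Complex.add_re, Complex.ofReal_re, Complex.mul_re, Complex.ofReal_re, Complex.ofReal_im]
  ring

lemma contOn_Kern (σ : ℝ) (w : ℂ) : ContinuousOn (fun x : ℝ => Kern σ w x) (Ioi 0) := by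
  unfold Kern
  have hlog : ContinuousOn (fun x : ℝ => ((Real.log x : ℂ))) (Ioi 0) :=
    Complex.continuous_ofReal.comp_continuousOn
      (Real.continuousOn_log.mono (fun x hx => ne_of_gt hx))
  apply ContinuousOn.mul
  · exact (Complex.continuous_ofReal.continuousOn).inv₀
      (fun x hx => by exact_mod_cast ne_of_gt (mem_Ioi.mp hx))
  · apply Complex.continuous_exp.comp_continuousOn
    apply ContinuousOn.add
    · apply ContinuousOn.sub
      · exact (Complex.continuous_ofReal.continuousOn).neg
      · exact ((hlog.pow 2).div_const _)
    · exact (hlog.const_smul (w / (σ:ℂ)^2) : )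

lemma differentiable_phiOne {σ : ℝ} (hσ : 0 < σ) : Differentiable ℂ (PhiOne σ) := by
  intro w₀
  set R : ℝ := |w₀.re| + 1 with hR
  have hσ2 : (0:ℝ) < σ^2 := by positivity
  have key : ∀ w : ℂ, |w.re| ≤ R → ∀ x : ℝ, 0 < x → ‖Kern σ w x‖ ≤
      Real.exp (-(1/(2*σ^2) * (Real.log x)^2) + R/σ^2 * |Real.log x|) * x⁻¹ := by
    intro w hw x hx
    rw [norm_Kern hσ w hx, mul_comm]
    apply mul_le_mul_of_nonneg_right _ (inv_nonneg.mpr hx.le)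
    apply Real.exp_le_exp.mpr
    have h1 : w.re * (Real.log x / σ^2) ≤ R/σ^2 * |Real.log x| := by
      calc w.re * (Real.log x / σ^2) ≤ |w.re * (Real.log x / σ^2)| := le_abs_self _
        _ = |w.re| * (|Real.log x| / σ^2) := by
            rw [abs_mul, abs_div, _root_.abs_of_pos hσ2]
        _ ≤ R * (|Real.log x| / σ^2) := by gcongr
        _ = R/σ^2 * |Real.log x| := by ring
    have h2 : (Real.log x)^2 / (2*σ^2) = 1/(2*σ^2) * (Real.log x)^2 := by ring
    linarith [hx.le]
  have hball : ∀ w : ℂ, w ∈ Metric.ball w₀ 1 → |w.re| ≤ R := by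
    intro w hw
    have h3 : |w.re - w₀.re| ≤ ‖w - w₀‖ := by
      simpa using Complex.abs_re_le_norm (w - w₀)
    have hlt : ‖w - w₀‖ < 1 := by simpa [Metric.mem_ball, dist_eq_norm] using hw
    have h4 := abs_sub_abs_le_abs_sub w.re w₀.re
    rw [hR]
    linarith
  have hw₀R : |w₀.re| ≤ R := by rw [hR]; linarith
  set bnd : ℝ → ℝ := fun x => (|Real.log x| / σ^2 *
      Real.exp (-(1/(2*σ^2) * (Real.log x)^2) + R/σ^2 * |Real.log x|)) * x⁻¹ with hbnd
  have hF_meas : ∀ᶠ w in nhds w₀, AEStronglyMeasurable (fun x => Kern σ w x)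
      (volume.restrict (Ioi 0)) :=
    Eventually.of_forall (fun w => ((contOn_Kern σ w).aestronglyMeasurable measurableSet_Ioi))
  have hgauss0 : Integrable (fun t : ℝ => Real.exp (-(1/(2*σ^2) * t^2) + R/σ^2 * |t|)) := by
    have := integrable_gauss_lin (1/(2*σ^2)) (R/σ^2) (by positivity) 0
    apply this.congr
    filter_upwards with t
    simp
  have hmaj : IntegrableOn (fun x : ℝ =>
      Real.exp (-(1/(2*σ^2) * (Real.log x)^2) + R/σ^2 * |Real.log x|) * x⁻¹) (Ioi 0) :=
    integrableOn_Ioi_comp_log (h := fun t => Real.exp (-(1/(2*σ^2) * t^2) + R/σ^2 * |t|)) hgauss0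
  have hF_int : Integrable (fun x => Kern σ w₀ x) (volume.restrict (Ioi 0)) := by
    apply hmaj.mono' ((contOn_Kern σ w₀).aestronglyMeasurable measurableSet_Ioi)
    filter_upwards [ae_restrict_mem (measurableSet_Ioi : MeasurableSet (Ioi (0:ℝ)))] with x hx
    exact key w₀ hw₀R x hx
  have hF'_meas : AEStronglyMeasurable
      (fun x => ((Real.log x : ℂ) / (σ:ℂ)^2) * Kern σ w₀ x) (volume.restrict (Ioi 0)) :=
    ((((Complex.continuous_ofReal.comp_continuousOn
        (Real.continuousOn_log.mono (fun x hx => ne_of_gt hx))).div_const _).mul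
        (contOn_Kern σ w₀)).aestronglyMeasurable measurableSet_Ioi)
  have h_bound : ∀ᵐ x ∂(volume.restrict (Ioi (0:ℝ))), ∀ w ∈ Metric.ball w₀ 1,
      ‖((Real.log x : ℂ) / (σ:ℂ)^2) * Kern σ w x‖ ≤ bnd x := by
    filter_upwards [ae_restrict_mem (measurableSet_Ioi : MeasurableSet (Ioi (0:ℝ)))] with x hx
    intro w hw
    rw [norm_mul]
    have h1 : ‖((Real.log x : ℂ) / (σ:ℂ)^2)‖ = |Real.log x| / σ^2 := by
      rw [norm_div, Complex.norm_real, Real.norm_eq_abs, norm_pow, Complex.norm_real,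
        Real.norm_eq_abs, _root_.sq_abs]
    rw [h1, hbnd]
    calc |Real.log x| / σ^2 * ‖Kern σ w x‖
        ≤ |Real.log x| / σ^2 *
            (Real.exp (-(1/(2*σ^2) * (Real.log x)^2) + R/σ^2 * |Real.log x|) * x⁻¹) := by
          gcongr
          exact key w (hball w hw) x hx
      _ = (|Real.log x| / σ^2 *
            Real.exp (-(1/(2*σ^2) * (Real.log x)^2) + R/σ^2 * |Real.log x|)) * x⁻¹ := by
          ring
  have h_bint : Integrable bnd (volume.restrict (Ioi 0)) := by
    have hg1 : Integrable (fun t : ℝ =>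
        |t| / σ^2 * Real.exp (-(1/(2*σ^2) * t^2) + R/σ^2 * |t|)) := by
      have := (integrable_gauss_lin (1/(2*σ^2)) (R/σ^2) (by positivity) 1).const_mul (1/σ^2)
      apply this.congr
      filter_upwards with t
      rw [pow_one]
      ring
    rw [hbnd]
    exact integrableOn_Ioi_comp_log
      (h := fun t => |t| / σ^2 * Real.exp (-(1/(2*σ^2) * t^2) + R/σ^2 * |t|)) hg1
  have h_diff : ∀ᵐ x ∂(volume.restrict (Ioi (0:ℝ))), ∀ w ∈ Metric.ball w₀ 1,
      HasDerivAt (fun w => Kern σ w x) (((Real.log x : ℂ) / (σ:ℂ)^2) * Kern σ w x) w := by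
    filter_upwards [ae_restrict_mem (measurableSet_Ioi : MeasurableSet (Ioi (0:ℝ)))] with x hx
    intro w hw
    have h := ((hasDerivAt_id w).mul_const ((Real.log x : ℂ))).div_const ((σ:ℂ)^2)
    have harg : HasDerivAt (fun w : ℂ => -(x:ℂ) - (Real.log x)^2 / (2 * (σ:ℂ)^2)
        + (w / (σ:ℂ)^2) * (Real.log x : ℂ)) ((Real.log x : ℂ) / (σ:ℂ)^2) w := by
      have h2 : HasDerivAt (fun w : ℂ => (w / (σ:ℂ)^2) * (Real.log x : ℂ))
          ((Real.log x : ℂ) / (σ:ℂ)^2) w := by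
        simpa only [one_mul, div_mul_eq_mul_div, id_eq] using h
      exact h2.const_add _
    have hfinal := (harg.cexp).const_mul ((x:ℂ)⁻¹)
    refine hfinal.congr_deriv ?_
    unfold Kern
    ring
  have main := hasDerivAt_integral_of_dominated_loc_of_deriv_le (Metric.ball_mem_nhds w₀ one_pos) hF_meas hF_int
    hF'_meas h_bound h_bint h_diff
  exact main.2.differentiableAt

lemma lognormal_nonneg {μ σ : ℝ} (hσ : 0 < σ) {x : ℝ} (hx : 0 < x) :
    0 ≤ lognormalDensity μ σ x := by
  unfold lognormalDensity
  have h2π := Real.sqrt_nonneg (2 * Real.pi)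
  positivity

lemma contOn_lognormal {μ σ : ℝ} (hσ : 0 < σ) : ContinuousOn (lognormalDensity μ σ) (Ioi 0) := by
  unfold lognormalDensity
  apply ContinuousOn.mul
  · apply ContinuousOn.inv₀
    · exact (continuous_const.mul continuous_id).continuousOn
    · intro x hx
      have hx' : (0:ℝ) < x := hx
      have h2π : 0 < Real.sqrt (2 * Real.pi) := Real.sqrt_pos.mpr (by positivity)
      positivity
  · apply Real.continuous_exp.comp_continuousOn
    apply ContinuousOn.div_const
    apply ContinuousOn.neg
    exact ((Real.continuousOn_log.mono (fun x hx => ne_of_gt hx)).sub continuousOn_const).pow 2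


lemma integrable_lognormal {μ σ : ℝ} (hσ : 0 < σ) :
    IntegrableOn (lognormalDensity μ σ) (Ioi 0) := by
  have hgauss : Integrable (fun t : ℝ =>
      (Real.sqrt (2 * Real.pi) * σ)⁻¹ * Real.exp (-(t - μ)^2 / (2 * σ^2))) := by
    have h0 : Integrable (fun t : ℝ => Real.exp (-(1/(2*σ^2)) * t^2)) :=
      integrable_exp_neg_mul_sq (by positivity)
    have h1 := (h0.comp_sub_right μ).const_mul (Real.sqrt (2 * Real.pi) * σ)⁻¹
    apply h1.congr
    filter_upwards with t
    congr 1
    rw [neg_div, neg_mul]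
    congr 1
    ring
  have := integrableOn_Ioi_comp_log
    (h := fun t => (Real.sqrt (2 * Real.pi) * σ)⁻¹ * Real.exp (-(t - μ)^2 / (2 * σ^2))) hgauss
  apply this.congr_fun ?_ measurableSet_Ioi
  intro x hx
  unfold lognormalDensity
  rw [mul_inv]
  ring

lemma differentiableAt_laplace {μ σ : ℝ} (hσ : 0 < σ) {z₀ : ℂ} (hz : 0 < z₀.re) :
    DifferentiableAt ℂ
      (fun z : ℂ => ∫ x : ℝ in Ioi 0, Complex.exp (-z * x) * (lognormalDensity μ σ x : ℂ)) z₀ := by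
  set δ : ℝ := z₀.re / 2 with hδ
  have hδpos : 0 < δ := by positivity
  have hball : ∀ w : ℂ, w ∈ Metric.ball z₀ δ → δ ≤ w.re := by
    intro w hw
    have h3 : |w.re - z₀.re| ≤ ‖w - z₀‖ := by
      simpa using Complex.abs_re_le_norm (w - z₀)
    have hlt : ‖w - z₀‖ < δ := by simpa [Metric.mem_ball, dist_eq_norm] using hw
    have := abs_le.mp h3
    rw [hδ]
    linarith [this.1]
  have hnorm : ∀ (w : ℂ) (x : ℝ), 0 < x →
      ‖Complex.exp (-w * x) * (lognormalDensity μ σ x : ℂ)‖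
        = Real.exp (-w.re * x) * lognormalDensity μ σ x := by
    intro w x hx
    rw [norm_mul, Complex.norm_exp, Complex.norm_real, Real.norm_eq_abs,
      _root_.abs_of_nonneg (lognormal_nonneg hσ hx)]
    congr 2
    simp [Complex.neg_re, Complex.mul_re]
  have hcont : ∀ w : ℂ, ContinuousOn
      (fun x : ℝ => Complex.exp (-w * x) * (lognormalDensity μ σ x : ℂ)) (Ioi 0) := by
    intro w
    apply ContinuousOn.mul
    · exact (Complex.continuous_exp.comp
        ((continuous_const.mul Complex.continuous_ofReal))).continuousOn
    · exact Complex.continuous_ofReal.comp_continuousOn (contOn_lognormal hσ)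
  have hmeas : ∀ w : ℂ, AEStronglyMeasurable
      (fun x : ℝ => Complex.exp (-w * x) * (lognormalDensity μ σ x : ℂ))
      (volume.restrict (Ioi 0)) :=
    fun w => (hcont w).aestronglyMeasurable measurableSet_Ioi
  have hF_int : Integrable (fun x : ℝ => Complex.exp (-z₀ * x) * (lognormalDensity μ σ x : ℂ))
      (volume.restrict (Ioi 0)) := by
    apply (integrable_lognormal hσ (μ := μ)).mono' (hmeas z₀)
    filter_upwards [ae_restrict_mem (measurableSet_Ioi : MeasurableSet (Ioi (0:ℝ)))] with x hx
    rw [hnorm z₀ x hx]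
    calc Real.exp (-z₀.re * x) * lognormalDensity μ σ x
        ≤ 1 * lognormalDensity μ σ x := by
          apply mul_le_mul_of_nonneg_right _ (lognormal_nonneg hσ hx)
          rw [show (1:ℝ) = Real.exp 0 by simp]
          apply Real.exp_le_exp.mpr
          have : 0 < z₀.re * x := mul_pos hz hx
          linarith
      _ = lognormalDensity μ σ x := one_mul _
  have hF'_meas : AEStronglyMeasurable
      (fun x : ℝ => (-(x:ℂ)) * (Complex.exp (-z₀ * x) * (lognormalDensity μ σ x : ℂ)))
      (volume.restrict (Ioi 0)) :=
    (((Complex.continuous_ofReal.neg.continuousOn).mul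
      (hcont z₀))).aestronglyMeasurable measurableSet_Ioi
  have h_bound : ∀ᵐ (x : ℝ) ∂(volume.restrict (Ioi (0:ℝ))), ∀ w ∈ Metric.ball z₀ δ,
      ‖(-(x:ℂ)) * (Complex.exp (-w * x) * (lognormalDensity μ σ x : ℂ))‖
        ≤ δ⁻¹ * lognormalDensity μ σ x := by
    filter_upwards [ae_restrict_mem (measurableSet_Ioi : MeasurableSet (Ioi (0:ℝ)))] with x hx
    intro w hw
    rw [norm_mul, hnorm w x hx]
    have hxn : ‖(-(x:ℂ))‖ = x := by
      rw [norm_neg, Complex.norm_real, Real.norm_eq_abs, _root_.abs_of_pos hx]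
    rw [hxn, ← mul_assoc]
    apply mul_le_mul_of_nonneg_right _ (lognormal_nonneg hσ hx)
    -- x * exp (-w.re * x) ≤ δ⁻¹
    have h1 : Real.exp (-w.re * x) ≤ Real.exp (-δ * x) := by
      apply Real.exp_le_exp.mpr
      have := hball w hw
      nlinarith [(mem_Ioi.mp hx).le]
    calc x * Real.exp (-w.re * x) ≤ x * Real.exp (-δ * x) := by
          apply mul_le_mul_of_nonneg_left h1 hx.le
      _ ≤ δ⁻¹ := by
          have h2 : δ * x ≤ Real.exp (δ * x) := by linarith [Real.add_one_le_exp (δ * x)]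
          have h3 : δ * (x * Real.exp (-δ * x)) ≤ 1 := by
            have h4 := mul_le_mul_of_nonneg_right h2 (Real.exp_pos (-δ * x)).le
            rw [← Real.exp_add] at h4
            simp only [neg_mul, add_neg_cancel, Real.exp_zero] at h4
            calc δ * (x * Real.exp (-δ * x)) = (δ * x) * Real.exp (-δ * x) := by ring
              _ ≤ 1 := by simpa [neg_mul] using h4
          refine le_of_mul_le_mul_left ?_ hδpos
          rw [mul_inv_cancel₀ hδpos.ne']
          exact h3
  have h_bint : Integrable (fun x => δ⁻¹ * lognormalDensity μ σ x)
      (volume.restrict (Ioi 0)) := (integrable_lognormal hσ (μ := μ)).const_mul _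
  have h_diff : ∀ᵐ (x : ℝ) ∂(volume.restrict (Ioi (0:ℝ))), ∀ w ∈ Metric.ball z₀ δ,
      HasDerivAt (fun z : ℂ => Complex.exp (-z * x) * (lognormalDensity μ σ x : ℂ))
        ((-(x:ℂ)) * (Complex.exp (-w * x) * (lognormalDensity μ σ x : ℂ))) w := by
    filter_upwards with x
    intro w hw
    have h := (((hasDerivAt_id w).neg.mul_const ((x:ℂ))).cexp).mul_const
      ((lognormalDensity μ σ x : ℂ))
    refine h.congr_deriv ?_
    simp only [Pi.neg_apply, id_eq]
    ring
  have main := hasDerivAt_integral_of_dominated_loc_of_deriv_le (Metric.ball_mem_nhds z₀ hδpos)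
    (Eventually.of_forall hmeas) hF_int hF'_meas h_bound h_bint h_diff
  exact main.2.differentiableAt

lemma pointwise_sub {μ σ : ℝ} (hσ : 0 < σ) {s x : ℝ} (hs : 0 < s) (hx : 0 < x) :
    (s : ℂ) * (((Real.sqrt (2 * Real.pi * σ^2) : ℂ))⁻¹ *
        Complex.exp (-((μ : ℂ) + (Real.log s : ℂ))^2 / (2 * σ^2)) *
        Kern σ ((μ : ℂ) + (Real.log s : ℂ)) (s * x))
      = Complex.exp (-(s:ℂ) * x) * (lognormalDensity μ σ x : ℂ) := by
  have hsqrt : Real.sqrt (2 * Real.pi * σ^2) = Real.sqrt (2 * Real.pi) * σ := by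
    rw [Real.sqrt_mul (by positivity), Real.sqrt_sq hσ.le]
  have hlogmul : Real.log (s * x) = Real.log s + Real.log x :=
    Real.log_mul hs.ne' hx.ne'
  have hσc : ((σ:ℂ))^2 ≠ 0 := pow_ne_zero 2 (Complex.ofReal_ne_zero.mpr hσ.ne')
  have hsc : (s:ℂ) ≠ 0 := Complex.ofReal_ne_zero.mpr hs.ne'
  have hxc : (x:ℂ) ≠ 0 := Complex.ofReal_ne_zero.mpr hx.ne'
  have hπc : ((Real.sqrt (2 * Real.pi) : ℂ)) ≠ 0 :=
    Complex.ofReal_ne_zero.mpr (by positivity)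
  simp only [Kern, lognormalDensity, hsqrt, hlogmul]
  push_cast
  have hcoef : (s:ℂ) * (((Real.sqrt (2*Real.pi) : ℂ) * σ)⁻¹ * ((s:ℂ) * x)⁻¹)
      = ((Real.sqrt (2*Real.pi) : ℂ) * σ * x)⁻¹ := by
    rw [mul_inv ((Real.sqrt (2*Real.pi) : ℂ) * (σ:ℂ)) (x:ℂ), mul_inv (s:ℂ) (x:ℂ),
      show (s:ℂ) * (((Real.sqrt (2*Real.pi) : ℂ) * σ)⁻¹ * ((s:ℂ)⁻¹ * (x:ℂ)⁻¹))
        = ((s:ℂ) * (s:ℂ)⁻¹) * (((Real.sqrt (2*Real.pi) : ℂ) * σ)⁻¹ * (x:ℂ)⁻¹) from by ring,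
      mul_inv_cancel₀ hsc, one_mul]
  have hexp : (-((μ:ℂ) + (Real.log s : ℂ))^2 / (2 * (σ:ℂ)^2))
      + (-((s:ℂ) * x) - ((Real.log s : ℂ) + (Real.log x : ℂ))^2 / (2 * (σ:ℂ)^2)
        + ((μ:ℂ) + (Real.log s : ℂ)) / (σ:ℂ)^2 * ((Real.log s : ℂ) + (Real.log x : ℂ)))
      = (-(s:ℂ) * x) + (-((Real.log x : ℂ) - μ)^2 / (2 * (σ:ℂ)^2)) := by
    field_simp
    ring
  calc (s:ℂ) * (((Real.sqrt (2*Real.pi) : ℂ) * σ)⁻¹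
          * Complex.exp (-((μ:ℂ) + (Real.log s : ℂ))^2 / (2 * (σ:ℂ)^2))
          * (((s:ℂ) * x)⁻¹ * Complex.exp (-((s:ℂ) * x)
              - ((Real.log s : ℂ) + (Real.log x : ℂ))^2 / (2 * (σ:ℂ)^2)
              + ((μ:ℂ) + (Real.log s : ℂ)) / (σ:ℂ)^2 * ((Real.log s : ℂ) + (Real.log x : ℂ)))))
      = ((s:ℂ) * (((Real.sqrt (2*Real.pi) : ℂ) * σ)⁻¹ * ((s:ℂ) * x)⁻¹))
          * (Complex.exp (-((μ:ℂ) + (Real.log s : ℂ))^2 / (2 * (σ:ℂ)^2))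
            * Complex.exp (-((s:ℂ) * x)
              - ((Real.log s : ℂ) + (Real.log x : ℂ))^2 / (2 * (σ:ℂ)^2)
              + ((μ:ℂ) + (Real.log s : ℂ)) / (σ:ℂ)^2 * ((Real.log s : ℂ) + (Real.log x : ℂ)))) := by
        ring
    _ = ((Real.sqrt (2*Real.pi) : ℂ) * σ * x)⁻¹
          * Complex.exp ((-(s:ℂ) * x) + (-((Real.log x : ℂ) - μ)^2 / (2 * (σ:ℂ)^2))) := by
        rw [hcoef, ← Complex.exp_add, hexp]
    _ = Complex.exp (-(s:ℂ) * x)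
          * (((Real.sqrt (2*Real.pi) : ℂ) * σ * x)⁻¹
            * Complex.exp (-((Real.log x : ℂ) - μ)^2 / (2 * (σ:ℂ)^2))) := by
        rw [Complex.exp_add]
        ring

lemma laplace_eq_real {μ σ : ℝ} (hσ : 0 < σ) {s : ℝ} (hs : 0 < s) :
    ((Real.sqrt (2 * Real.pi * σ^2) : ℂ))⁻¹ *
        Complex.exp (-(↑μ + Complex.log (s:ℂ))^2 / (2 * σ^2)) *
        PhiOne σ (↑μ + Complex.log (s:ℂ))
      = ∫ x : ℝ in Ioi 0, Complex.exp (-(s:ℂ) * x) * (lognormalDensity μ σ x : ℂ) := by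
  have hsc : (s:ℂ) ≠ 0 := Complex.ofReal_ne_zero.mpr hs.ne'
  have hlog : Complex.log (s:ℂ) = ((Real.log s : ℝ) : ℂ) := (Complex.ofReal_log hs.le).symm
  rw [hlog]
  have h1 : PhiOne σ ((μ:ℂ) + (Real.log s : ℂ))
      = ∫ y : ℝ in Ioi 0, Kern σ ((μ:ℂ) + (Real.log s : ℂ)) y := rfl
  have hsub := integral_comp_mul_left_Ioi (fun y => Kern σ ((μ:ℂ) + (Real.log s : ℂ)) y) 0 hs
  rw [mul_zero] at hsub
  have h2 : PhiOne σ ((μ:ℂ) + (Real.log s : ℂ))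
      = (s:ℂ) * ∫ x : ℝ in Ioi 0, Kern σ ((μ:ℂ) + (Real.log s : ℂ)) (s * x) := by
    rw [h1, hsub, Complex.real_smul]
    push_cast
    rw [← mul_assoc, mul_inv_cancel₀ hsc, one_mul]
  rw [h2]
  have h3 : ∀ x : ℝ, (((Real.sqrt (2 * Real.pi * σ^2) : ℂ))⁻¹ *
        Complex.exp (-((μ:ℂ) + (Real.log s : ℂ))^2 / (2 * σ^2)) *
        ((s:ℂ) * Kern σ ((μ:ℂ) + (Real.log s : ℂ)) (s * x)))
      = (((Real.sqrt (2 * Real.pi * σ^2) : ℂ))⁻¹ *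
        Complex.exp (-((μ:ℂ) + (Real.log s : ℂ))^2 / (2 * σ^2))) *
        ((s:ℂ) * Kern σ ((μ:ℂ) + (Real.log s : ℂ)) (s * x)) := fun x => rfl
  rw [mul_assoc, ← integral_const_mul, ← integral_const_mul, ← integral_const_mul]
  apply setIntegral_congr_fun measurableSet_Ioi
  intro x hx
  have hpw := pointwise_sub (μ := μ) hσ hs (mem_Ioi.mp hx)
  show ((Real.sqrt (2 * Real.pi * σ^2) : ℂ))⁻¹ *
        (Complex.exp (-((μ:ℂ) + (Real.log s : ℂ))^2 / (2 * σ^2)) *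
        ((s:ℂ) * Kern σ ((μ:ℂ) + (Real.log s : ℂ)) (s * x)))
      = Complex.exp (-(s:ℂ) * x) * (lognormalDensity μ σ x : ℂ)
  rw [← hpw]
  ring


/-- The Laplace transform of a lognormal distribution extends analytically to
ℂ \ (-∞,0] via z ↦ (2πσ²)^{-1/2} exp(-(μ + Log z)²/(2σ²)) Φ(1, μ + Log z; σ):
this function is holomorphic on the slit plane and agrees with the Laplace
transform for Re(z) > 0. -/
theorem lognormal_laplace_analytic_continuation (μ σ : ℝ) (hσ : 0 < σ) :
    DifferentiableOn ℂ
      (fun z : ℂ => ((Real.sqrt (2 * Real.pi * σ^2) : ℂ))⁻¹ *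
        Complex.exp (-(↑μ + Complex.log z)^2 / (2 * σ^2)) *
        PhiOne σ (↑μ + Complex.log z))
      Complex.slitPlane ∧
    ∀ z : ℂ, 0 < z.re →
      ((Real.sqrt (2 * Real.pi * σ^2) : ℂ))⁻¹ *
        Complex.exp (-(↑μ + Complex.log z)^2 / (2 * σ^2)) *
        PhiOne σ (↑μ + Complex.log z)
      = ∫ x : ℝ in Ioi 0, Complex.exp (-z * x) * (lognormalDensity μ σ x : ℂ) := by
  have hPart1 : DifferentiableOn ℂ
      (fun z : ℂ => ((Real.sqrt (2 * Real.pi * σ^2) : ℂ))⁻¹ *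
        Complex.exp (-(↑μ + Complex.log z)^2 / (2 * σ^2)) *
        PhiOne σ (↑μ + Complex.log z)) Complex.slitPlane := by
    intro z hz
    apply DifferentiableAt.differentiableWithinAt
    have hlogd : DifferentiableAt ℂ Complex.log z := Complex.differentiableAt_log hz
    have hw : DifferentiableAt ℂ (fun z : ℂ => (μ:ℂ) + Complex.log z) z :=
      (differentiableAt_const _).add hlogd
    have h1 : DifferentiableAt ℂ
        (fun z : ℂ => Complex.exp (-((μ:ℂ) + Complex.log z)^2 / (2 * (σ:ℂ)^2))) z :=
      (((hw.pow 2).neg).div_const _).cexp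
    have h2 : DifferentiableAt ℂ (fun z : ℂ => PhiOne σ ((μ:ℂ) + Complex.log z)) z :=
      DifferentiableAt.comp (g := PhiOne σ) z ((differentiable_phiOne hσ) ((μ:ℂ) + Complex.log z)) hw
    exact ((differentiableAt_const _).mul h1).mul h2
  refine ⟨hPart1, ?_⟩
  intro z hz
  have hUopen : IsOpen {w : ℂ | 0 < w.re} := isOpen_lt continuous_const Complex.continuous_re
  have hUpre : IsPreconnected {w : ℂ | 0 < w.re} := (convex_halfSpace_re_gt 0).isPreconnected
  have hUsub : {w : ℂ | 0 < w.re} ⊆ Complex.slitPlane := fun w hw => Or.inl hw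
  have hf : AnalyticOnNhd ℂ
      (fun z : ℂ => ((Real.sqrt (2 * Real.pi * σ^2) : ℂ))⁻¹ *
        Complex.exp (-(↑μ + Complex.log z)^2 / (2 * σ^2)) *
        PhiOne σ (↑μ + Complex.log z)) {w : ℂ | 0 < w.re} :=
    (hPart1.mono hUsub).analyticOnNhd hUopen
  have hg : AnalyticOnNhd ℂ
      (fun z : ℂ => ∫ x : ℝ in Ioi 0, Complex.exp (-z * x) * (lognormalDensity μ σ x : ℂ))
      {w : ℂ | 0 < w.re} := by
    apply DifferentiableOn.analyticOnNhd ?_ hUopen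
    exact fun w hw => (differentiableAt_laplace hσ hw).differentiableWithinAt
  have hone : (1:ℂ) ∈ {w : ℂ | 0 < w.re} := by simp
  have hseq : Tendsto (fun n : ℕ => ((1 + ((n:ℝ)+1)⁻¹ : ℝ) : ℂ)) atTop (𝓝[≠] (1:ℂ)) := by
    apply tendsto_nhdsWithin_of_tendsto_nhds_of_eventually_within
    · have h0 : Tendsto (fun n : ℕ => (1 + ((n:ℝ)+1)⁻¹ : ℝ)) atTop (𝓝 1) := by
        have h1 := tendsto_one_div_add_atTop_nhds_zero_nat (𝕜 := ℝ)
        have h2 := (tendsto_const_nhds (x := (1:ℝ)) (f := atTop (α := ℕ))).add h1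
        simpa [one_div] using h2
      have h3 := (Complex.continuous_ofReal.tendsto 1).comp h0
      simpa [Function.comp_def] using h3
    · filter_upwards with n
      simp only [mem_compl_iff, mem_singleton_iff]
      intro hcon
      have hre : (1 + ((n:ℝ)+1)⁻¹ : ℝ) = 1 := by exact_mod_cast hcon
      have hpos : (0:ℝ) < ((n:ℝ)+1)⁻¹ := by positivity
      linarith
  have hfreq : ∃ᶠ w in 𝓝[≠] (1:ℂ),
      ((Real.sqrt (2 * Real.pi * σ^2) : ℂ))⁻¹ *
        Complex.exp (-(↑μ + Complex.log w)^2 / (2 * σ^2)) *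
        PhiOne σ (↑μ + Complex.log w)
      = ∫ x : ℝ in Ioi 0, Complex.exp (-w * x) * (lognormalDensity μ σ x : ℂ) := by
    apply hseq.frequently
    apply Frequently.of_forall
    intro n
    exact laplace_eq_real hσ (by positivity)
  exact hf.eqOn_of_preconnected_of_frequently_eq hg hUpre hone hfreq hz
end

section
/- For any k > 0 and z ∈ ℂ \ (-∞,0], the Mellin–Barnes integral (1/(2πi)) ∫_{k-i∞}^{k+i∞} Γ(s) exp(-(μ + Log z)s + (σ²/2)s²) ds converges absolutely, and for z real positive it equals the Laplace transform φ(z) = ∫₀^∞ e^{-zx} f(x;μ,σ) dx of the lognormal distribution. -/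
open MeasureTheory Complex Set

/-- The integrand of the Mellin–Barnes integral along the line Re(s) = k. -/
noncomputable def mellinBarnesIntegrand (μ σ k : ℝ) (z : ℂ) (t : ℝ) : ℂ :=
  Complex.Gamma (k + t * Complex.I) *
    Complex.exp (-(↑μ + Complex.log z) * (k + t * Complex.I)
      + (σ:ℂ)^2 / 2 * (k + t * Complex.I)^2)

lemma gamma_norm_le' (k : ℝ) (hk : 0 < k) (t : ℝ) :
    ‖Complex.Gamma (k + t*Complex.I)‖ ≤ Real.Gamma k := by
  rw [Complex.Gamma_eq_integral (by simp [hk] : 0 < (↑k + ↑t*Complex.I).re),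
    Complex.GammaIntegral, Real.Gamma_eq_integral hk]
  refine (norm_integral_le_integral_norm _).trans_eq ?_
  refine setIntegral_congr_fun measurableSet_Ioi fun u hu => ?_
  simp only [norm_mul, Complex.norm_real, Real.norm_eq_abs,
    Complex.norm_cpow_eq_rpow_re_of_pos hu]
  rw [_root_.abs_of_nonneg (Real.exp_pos _).le]
  norm_num

lemma mb_eq' (μ σ k : ℝ) (z : ℂ) (t : ℝ) :
    mellinBarnesIntegrand μ σ k z t = Complex.Gamma (k + t * Complex.I) *
      Complex.exp ((-(σ:ℂ)^2/2) * (t:ℂ)^2 + (((σ:ℂ)^2*k - (↑μ + Complex.log z)) * Complex.I) * t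
        + (-(↑μ + Complex.log z)*k + (σ:ℂ)^2/2*k^2)) := by
  rw [mellinBarnesIntegrand]; congr 2
  linear_combination (σ:ℂ)^2/2 * (t:ℂ)^2 * Complex.I_sq

lemma mb_integrable' (μ σ k : ℝ) (hσ : 0 < σ) (hk : 0 < k) (z : ℂ) :
    Integrable (mellinBarnesIntegrand μ σ k z) := by
  have hb : (0:ℝ) < ((σ:ℂ)^2/2).re := by
    simp only [← Complex.ofReal_pow, div_ofNat_re, Complex.ofReal_re]
    positivity
  have hint := (integrable_cexp_quadratic hb
    (((σ:ℂ)^2*k - (↑μ + Complex.log z)) * Complex.I)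
    (-(↑μ + Complex.log z)*k + (σ:ℂ)^2/2*k^2)).norm.const_mul (Real.Gamma k)
  refine Integrable.mono' hint ?_ ?_
  · refine Continuous.aestronglyMeasurable (Continuous.mul ?_ (by fun_prop))
    refine continuous_iff_continuousAt.mpr fun t => ?_
    refine (Complex.differentiableAt_Gamma _ fun m => ?_).continuousAt.comp (by fun_prop)
    intro h
    have h2 := congrArg Complex.re h
    simp at h2
    have : (0:ℝ) ≤ (m:ℝ) := Nat.cast_nonneg m
    linarith
  · filter_upwards with t
    rw [mb_eq', norm_mul]
    gcongr
    · exact gamma_norm_le' k hk t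
    · ring_nf; exact le_refl _

/-- The joint integrand for the Fubini argument. -/
noncomputable def lmbF (μ σ k x : ℝ) (t u : ℝ) : ℂ :=
  Complex.exp (-(u:ℂ) + ((k:ℂ) + t*Complex.I - 1) * (Real.log u : ℂ)
    + (-(σ:ℂ)^2/2 * t^2 + ((σ^2*k - (μ + Real.log x) : ℝ):ℂ)*Complex.I*t
      + ((-((μ + Real.log x)*k) + σ^2/2*k^2 : ℝ):ℂ)))

lemma lmbF_integrable (μ σ k x : ℝ) (hσ : 0 < σ) (hk : 0 < k) :
    Integrable (Function.uncurry (lmbF μ σ k x))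
      (volume.prod (volume.restrict (Ioi 0))) := by
  have hb : (0:ℝ) < ((σ:ℂ)^2/2).re := by
    simp only [← Complex.ofReal_pow, div_ofNat_re, Complex.ofReal_re]
    positivity
  have hbound := ((integrable_cexp_quadratic hb
      (((σ^2*k - (μ + Real.log x) : ℝ):ℂ)*Complex.I)
      ((-((μ + Real.log x)*k) + σ^2/2*k^2 : ℝ):ℂ)).norm.mul_prod
    (Real.GammaIntegral_convergent hk))
  refine Integrable.mono' hbound ?_ ?_
  · apply Measurable.aestronglyMeasurable
    apply Complex.measurable_exp.comp
    have h1 : Measurable (Real.log) := Real.measurable_log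
    have h2 : Measurable (Complex.ofReal) := Complex.measurable_ofReal
    fun_prop
  · have hmeq : volume.prod (volume.restrict (Ioi (0:ℝ)))
        = (volume.prod volume).restrict ((univ : Set ℝ) ×ˢ Ioi (0:ℝ)) := by
      conv_lhs => rw [show (volume : Measure ℝ) = volume.restrict univ from
        Measure.restrict_univ.symm]
      rw [Measure.prod_restrict, Measure.restrict_univ]
    rw [hmeq]
    filter_upwards [ae_restrict_mem (MeasurableSet.univ.prod measurableSet_Ioi)] with p hp
    have hu : (0:ℝ) < p.2 := hp.2
    rw [Function.uncurry]
    simp only [lmbF, Complex.norm_exp]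
    rw [Real.rpow_def_of_pos hu, mul_comm (Real.log p.2), ← Real.exp_add, ← Real.exp_add]
    apply le_of_eq
    congr 1
    simp only [add_re, neg_re, mul_re, sub_re, one_re, ofReal_re, ofReal_im, I_re, I_im,
      add_im, sub_im, one_im, mul_im, div_ofNat_re, div_ofNat_im, neg_im, ofReal_pow]
    ring

/-- For any k > 0 and z ∈ ℂ \ (-∞,0], the Mellin–Barnes integral
(1/(2πi)) ∫_{k-i∞}^{k+i∞} Γ(s) e^{-(μ+Log z)s + (σ²/2)s²} ds converges absolutely,
and for real positive z it equals the lognormal Laplace transform. -/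
theorem lognormal_mellinBarnes (μ σ k : ℝ) (hσ : 0 < σ) (hk : 0 < k) :
    (∀ z ∈ Complex.slitPlane, Integrable (mellinBarnesIntegrand μ σ k z)) ∧
    ∀ x : ℝ, 0 < x →
      (1 / (2 * Real.pi)) * ∫ t : ℝ, mellinBarnesIntegrand μ σ k (x : ℂ) t
        = ∫ y : ℝ in Ioi 0, Complex.exp (-(x:ℂ) * y) * (lognormalDensity μ σ y : ℂ) := by
  refine ⟨fun z _ => mb_integrable' μ σ k hσ hk z, fun x hx => ?_⟩
  have hπ : (0:ℝ) < 2 * Real.pi := by positivity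
  have hs2π : (0:ℝ) < Real.sqrt (2*Real.pi) := Real.sqrt_pos.mpr hπ
  have h2π : Real.sqrt (2*Real.pi) ^ 2 = 2*Real.pi := Real.sq_sqrt hπ.le
  set c0 : ℝ := μ + Real.log x with hc0
  set g : ℝ → ℝ := fun u =>
    Real.sqrt (2*Real.pi)/σ * Real.exp (-u - Real.log u - (Real.log u - c0)^2/(2*σ^2)) with hg
  have hlog : (↑μ + Complex.log ↑x) = ((c0 : ℝ) : ℂ) := by
    rw [← Complex.ofReal_log hx.le, hc0]; push_cast; ring
  -- Step 1 : pointwise Gamma integral representation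
  have step1 : ∀ t : ℝ, mellinBarnesIntegrand μ σ k ↑x t
      = ∫ u in Ioi (0:ℝ), lmbF μ σ k x t u := by
    intro t
    rw [mb_eq', hlog, Complex.Gamma_eq_integral (by simp [hk] : 0 < (↑k + ↑t*Complex.I).re),
      Complex.GammaIntegral, ← integral_mul_const]
    refine setIntegral_congr_fun measurableSet_Ioi fun u hu => ?_
    rw [lmbF, Complex.cpow_def_of_ne_zero (ofReal_ne_zero.mpr (ne_of_gt hu)),
      ← Complex.ofReal_log hu.le, Complex.ofReal_exp, ← Complex.exp_add, ← Complex.exp_add]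
    congr 1
    push_cast [hc0]
    ring
  -- Step 3 : the inner t-integral
  have step3 : ∀ u ∈ Ioi (0:ℝ), (∫ t : ℝ, lmbF μ σ k x t u) = ((g u : ℝ) : ℂ) := by
    intro u hu
    have hrw : ∀ t : ℝ, lmbF μ σ k x t u
        = Complex.exp ((-(σ:ℂ)^2/2) * (t:ℂ)^2
            + ((σ^2*k - c0 + Real.log u : ℝ):ℂ) * Complex.I * t
            + ((-u + (k-1)*Real.log u + (-(c0*k) + σ^2/2*k^2) : ℝ):ℂ)) := by
      intro t; rw [lmbF]; congr 1; push_cast [hc0]; ring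
    have hbneg : ((-(σ:ℂ)^2/2)).re < 0 := by
      have : ((-(σ:ℂ)^2/2)).re = -σ^2/2 := by simp [← Complex.ofReal_pow]
      rw [this]
      nlinarith [pow_pos hσ 2]
    simp_rw [hrw]
    rw [integral_cexp_quadratic hbneg]
    have hsqrt : (↑Real.pi / -(-(σ:ℂ)^2/2)) ^ (1/2 : ℂ) = ((Real.sqrt (2*Real.pi)/σ : ℝ) : ℂ) := by
      have h1 : (↑Real.pi / -(-(σ:ℂ)^2/2)) = ((2*Real.pi/σ^2 : ℝ) : ℂ) := by
        push_cast; field_simp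
      rw [h1, show (1/2 : ℂ) = ((1/2 : ℝ) : ℂ) by norm_num,
        ← Complex.ofReal_cpow (by positivity), ← Real.sqrt_eq_rpow,
        Real.sqrt_div hπ.le, Real.sqrt_sq hσ.le]
    have hexp : ((-u + (k-1)*Real.log u + (-(c0*k) + σ^2/2*k^2) : ℝ):ℂ)
        - (((σ^2*k - c0 + Real.log u : ℝ):ℂ) * Complex.I)^2 / (4 * (-(σ:ℂ)^2/2))
        = ((-u - Real.log u - (Real.log u - c0)^2/(2*σ^2) : ℝ) : ℂ) := by
      have hI : (((σ^2*k - c0 + Real.log u : ℝ):ℂ) * Complex.I)^2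
          = -(((σ^2*k - c0 + Real.log u)^2 : ℝ) : ℂ) := by
        rw [mul_pow, Complex.I_sq]; push_cast; ring
      rw [hI]
      have hreal : (-u + (k-1)*Real.log u + (-(c0*k) + σ^2/2*k^2))
          + (σ^2*k - c0 + Real.log u)^2 / (-(2*σ^2))
          = -u - Real.log u - (Real.log u - c0)^2/(2*σ^2) := by
        field_simp
        ring
      rw [← hreal]
      push_cast
      field_simp
      ring
    rw [hsqrt, hexp, ← Complex.ofReal_exp, ← Complex.ofReal_mul, hg]
  -- assemble the LHS
  have swap := integral_integral_swap (lmbF_integrable μ σ k x hσ hk)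
  have lhs_eq : (∫ t : ℝ, mellinBarnesIntegrand μ σ k ↑x t)
      = ((∫ u in Ioi (0:ℝ), g u : ℝ) : ℂ) := by
    rw [show (∫ t : ℝ, mellinBarnesIntegrand μ σ k ↑x t)
        = ∫ t : ℝ, ∫ u in Ioi (0:ℝ), lmbF μ σ k x t u from integral_congr_ae
          (Filter.Eventually.of_forall step1), swap,
      setIntegral_congr_fun measurableSet_Ioi step3]
    exact integral_ofReal
  rw [lhs_eq]
  -- the RHS as a real integral
  have rhs_eq : (∫ y in Ioi (0:ℝ), Complex.exp (-(x:ℂ) * y) * ((lognormalDensity μ σ y : ℝ) : ℂ))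
      = ((∫ y in Ioi (0:ℝ), Real.exp (-(x*y)) * lognormalDensity μ σ y : ℝ) : ℂ) := by
    rw [show (∫ y in Ioi (0:ℝ), Complex.exp (-(x:ℂ) * y) * ((lognormalDensity μ σ y : ℝ) : ℂ))
        = ∫ y in Ioi (0:ℝ), ((Real.exp (-(x*y)) * lognormalDensity μ σ y : ℝ) : ℂ) from
      setIntegral_congr_fun measurableSet_Ioi fun y hy => by push_cast; ring]
    exact integral_ofReal
  rw [rhs_eq]
  -- reduce to a real identity
  have key : (1 / (2 * Real.pi)) * (∫ u in Ioi (0:ℝ), g u)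
      = ∫ y in Ioi (0:ℝ), Real.exp (-(x*y)) * lognormalDensity μ σ y := by
    have hcv := integral_comp_mul_left_Ioi
      (fun u => Real.exp (-u) * lognormalDensity μ σ (u/x)) 0 hx
    simp only [mul_zero] at hcv
    rw [show (∫ y in Ioi (0:ℝ), Real.exp (-(x*y)) * lognormalDensity μ σ y)
        = ∫ y in Ioi (0:ℝ), (fun u => Real.exp (-u) * lognormalDensity μ σ (u/x)) (x*y) from
      setIntegral_congr_fun measurableSet_Ioi fun y hy => by
        simp only [mul_div_cancel_left₀ _ hx.ne'], hcv, smul_eq_mul, ← integral_const_mul,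
      ← integral_const_mul]
    refine setIntegral_congr_fun measurableSet_Ioi fun u hu => ?_
    have hu0 : (0:ℝ) < u := hu
    simp only [hg]
    rw [lognormalDensity, Real.log_div hu0.ne' hx.ne',
      show -u - Real.log u - (Real.log u - c0)^2/(2*σ^2)
        = (-u) + (-Real.log u) + (-(Real.log u - c0)^2/(2*σ^2)) by ring,
      Real.exp_add, Real.exp_add, Real.exp_neg (Real.log u), Real.exp_log hu0,
      show -(Real.log u - Real.log x - μ)^2 / (2*σ^2)
        = -(Real.log u - c0)^2/(2*σ^2) by rw [hc0]; ring_nf]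
    field_simp
    have h22 : Real.sqrt 2 * Real.sqrt Real.pi * (Real.sqrt 2 * Real.sqrt Real.pi)
        = 2 * Real.pi := by
      rw [show Real.sqrt 2 * Real.sqrt Real.pi * (Real.sqrt 2 * Real.sqrt Real.pi)
          = (Real.sqrt 2 * Real.sqrt 2) * (Real.sqrt Real.pi * Real.sqrt Real.pi) by ring,
        Real.mul_self_sqrt (by norm_num), Real.mul_self_sqrt Real.pi_pos.le]
    linear_combination h2π
  rw [show ((1:ℂ) / (2 * (Real.pi:ℂ))) * ((∫ u in Ioi (0:ℝ), g u : ℝ) : ℂ)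
      = (((1 / (2 * Real.pi)) * ∫ u in Ioi (0:ℝ), g u : ℝ) : ℂ) by push_cast; ring, key]
end

section
/- For σ > 0, k ∈ ℝ, m a nonnegative integer, and w ∈ ℂ, the contour integral (1/(2πi)) ∫_{k-i∞}^{k+i∞} s^m exp(ws + (σ²/2)s²) ds equals ((-1)^m /(√(2π) σ^{m+1})) e^{-w²/(2σ²)} H_m(w/σ), where H_m is the m-th probabilist's Hermite polynomial. -/
open MeasureTheory Complex Set

section Helpers

open Real Filter Asymptotics Polynomial

lemma hermite_deriv_aux (n : ℕ) :
    Polynomial.derivative (Polynomial.hermite (n+1)) = (n+1 : Polynomial ℤ) * Polynomial.hermite n := by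
  induction n with
  | zero => simp [Polynomial.hermite_one, Polynomial.hermite_zero]
  | succ n ih =>
      rw [Polynomial.hermite_succ (n+1), Polynomial.derivative_sub, Polynomial.derivative_mul,
        Polynomial.derivative_X, ih, Polynomial.derivative_mul, Polynomial.hermite_succ n]
      simp [Polynomial.derivative_natCast]
      ring

lemma rexp_quad_integrable {a : ℝ} (ha : a < 0) (β : ℝ) :
    Integrable fun t : ℝ => Real.exp (a*t^2 + β*t) := by
  have h := (integrable_cexp_quadratic' (b := (a:ℂ)) (by simpa using ha) (β:ℂ) 0).norm
  refine h.congr (Filter.Eventually.of_forall fun t => ?_)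
  show ‖Complex.exp _‖ = _
  have : (a:ℂ)*(t:ℂ)^2+(β:ℂ)*(t:ℂ)+0 = ((a*t^2+β*t : ℝ):ℂ) := by push_cast; ring
  rw [this, Complex.norm_exp, Complex.ofReal_re]

lemma norm_cexp_quad (b c : ℂ) (t : ℝ) :
    ‖Complex.exp (b*(t:ℂ)^2+c*(t:ℂ))‖ = Real.exp (b.re*t^2 + c.re*t) := by
  rw [Complex.norm_exp]
  congr 1
  simp [Complex.add_re, Complex.mul_re, ← Complex.ofReal_pow]

lemma norm_line_le (k : ℝ) (m : ℕ) (t : ℝ) :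
    ‖((k:ℂ) + (t:ℂ)*Complex.I)^m‖ ≤ (|k|+1)^m * Real.exp (m*|t|) := by
  rw [norm_pow]
  have h1 : ‖(k:ℂ) + (t:ℂ)*Complex.I‖ ≤ (|k|+1) * Real.exp |t| := by
    have h2 : ‖(k:ℂ) + (t:ℂ)*Complex.I‖ ≤ |k| + |t| := by
      refine (norm_add_le _ _).trans ?_
      simp
    refine h2.trans ?_
    nlinarith [Real.add_one_le_exp |t|, abs_nonneg k, abs_nonneg t]
  calc ‖(k:ℂ) + (t:ℂ)*Complex.I‖^m ≤ ((|k|+1) * Real.exp |t|)^m := by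
        exact pow_le_pow_left₀ (norm_nonneg _) h1 m
    _ = (|k|+1)^m * Real.exp (m*|t|) := by
        rw [mul_pow, ← Real.exp_nat_mul]

lemma integrable_aux {b : ℂ} (hb : b.re < 0) (c : ℂ) (k : ℝ) (m : ℕ) :
    Integrable fun t : ℝ => ((k:ℂ) + (t:ℂ)*Complex.I)^m * Complex.exp (b*(t:ℂ)^2+c*(t:ℂ)) := by
  have hcont : Continuous fun t : ℝ => ((k:ℂ) + (t:ℂ)*Complex.I)^m * Complex.exp (b*(t:ℂ)^2+c*(t:ℂ)) := by
    fun_prop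
  refine Integrable.mono' ((((rexp_quad_integrable hb (c.re+m)).add
    (rexp_quad_integrable hb (c.re-m))).const_mul ((|k|+1)^m))) hcont.aestronglyMeasurable
    (Filter.Eventually.of_forall fun t => ?_)
  rw [norm_mul, norm_cexp_quad]
  calc ‖((k:ℂ) + (t:ℂ)*Complex.I)^m‖ * Real.exp (b.re*t^2 + c.re*t)
      ≤ ((|k|+1)^m * Real.exp (m*|t|)) * Real.exp (b.re*t^2 + c.re*t) := by
        exact mul_le_mul_of_nonneg_right (norm_line_le k m t) (Real.exp_nonneg _)
    _ ≤ (|k|+1)^m * (Real.exp (b.re*t^2 + (c.re+m)*t) + Real.exp (b.re*t^2 + (c.re-m)*t)) := by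
        rw [mul_assoc, ← Real.exp_add]
        refine mul_le_mul_of_nonneg_left ?_ (by positivity)
        rcases le_or_gt 0 t with h | h
        · rw [_root_.abs_of_nonneg h]
          refine le_add_of_le_of_nonneg (Real.exp_le_exp.2 (by ring_nf; rfl)) (Real.exp_nonneg _)
        · rw [abs_of_neg h]
          refine le_add_of_nonneg_of_le (Real.exp_nonneg _) (Real.exp_le_exp.2 (by ring_nf; rfl))

lemma tendsto_aux {b : ℂ} (hb : b.re < 0) (c : ℂ) (k : ℝ) (m : ℕ) :
    Tendsto (fun t : ℝ => ((k:ℂ) + (t:ℂ)*Complex.I)^m * Complex.exp (b*(t:ℂ)^2+c*(t:ℂ)))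
      (cocompact ℝ) (nhds 0) := by
  have hev : ∀ᶠ t : ℝ in cocompact ℝ, 1 ≤ |t| := by
    rw [cocompact_eq_atBot_atTop, eventually_sup]
    constructor
    · filter_upwards [eventually_le_atBot (-1 : ℝ)] with t ht
      rw [le_abs]; right; linarith
    · filter_upwards [eventually_ge_atTop (1 : ℝ)] with t ht
      rw [le_abs]; left; linarith
  have h1 := cexp_neg_quadratic_isLittleO_abs_rpow_cocompact hb c (-(m:ℝ))
  have h2 : (fun t : ℝ => ((k:ℂ) + (t:ℂ)*Complex.I)^m) =O[cocompact ℝ]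
      (fun t : ℝ => |t| ^ (m:ℝ)) := by
    rw [isBigO_iff]
    refine ⟨(|k|+1)^m, ?_⟩
    filter_upwards [hev] with t ht
    rw [norm_pow]
    have h3 : ‖((k:ℂ) + (t:ℂ)*Complex.I)‖ ≤ (|k|+1) * |t| := by
      refine (norm_add_le _ _).trans ?_
      have h5 : ‖(k:ℂ)‖ = |k| := by simp
      have h4 : ‖(t:ℂ)*Complex.I‖ = |t| := by simp
      rw [h5, h4]
      nlinarith [abs_nonneg k]
    calc ‖((k:ℂ) + (t:ℂ)*Complex.I)‖^m ≤ ((|k|+1) * |t|)^m :=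
          pow_le_pow_left₀ (norm_nonneg _) h3 m
      _ = (|k|+1)^m * ‖|t| ^ (m:ℝ)‖ := by
          rw [mul_pow, Real.rpow_natCast, Real.norm_eq_abs,
            _root_.abs_of_nonneg (pow_nonneg (abs_nonneg t) m)]
  have h3 := h2.mul_isLittleO h1
  rw [← isLittleO_one_iff ℝ]
  refine h3.trans_isBigO ?_
  rw [isBigO_iff]
  refine ⟨1, ?_⟩
  filter_upwards [hev] with t ht
  have ht0 : (0:ℝ) < |t| := by linarith
  rw [← Real.rpow_add ht0]
  simp

lemma rec_aux {b : ℂ} (hb : b.re < 0) (c d : ℂ) (k : ℝ) (n : ℕ) :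
    (n:ℂ) * Complex.I *
      (∫ t : ℝ, ((k:ℂ)+(t:ℂ)*Complex.I)^(n-1) * Complex.exp (b*(t:ℂ)^2+c*(t:ℂ)+d))
    + (-2*b*Complex.I) *
      (∫ t : ℝ, ((k:ℂ)+(t:ℂ)*Complex.I)^(n+1) * Complex.exp (b*(t:ℂ)^2+c*(t:ℂ)+d))
    + (2*b*Complex.I*(k:ℂ) + c) *
      (∫ t : ℝ, ((k:ℂ)+(t:ℂ)*Complex.I)^n * Complex.exp (b*(t:ℂ)^2+c*(t:ℂ)+d)) = 0 := by
  set A : ℕ → ℝ → ℂ := fun j t => ((k:ℂ)+(t:ℂ)*Complex.I)^j * Complex.exp (b*(t:ℂ)^2+c*(t:ℂ)+d)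
    with hA
  have IA : ∀ j, Integrable (A j) := by
    intro j
    refine ((integrable_aux hb c k j).mul_const (Complex.exp d)).congr
      (Filter.Eventually.of_forall fun t => ?_)
    simp only [hA, Complex.exp_add]; ring
  have hT : Tendsto (A n) (cocompact ℝ) (nhds 0) := by
    have h := (tendsto_aux hb c k n).mul_const (Complex.exp d)
    rw [zero_mul] at h
    refine h.congr fun t => ?_
    simp only [hA, Complex.exp_add]; ring
  have hD : ∀ t : ℝ, HasDerivAt (A n)
      ((n:ℂ) * Complex.I * A (n-1) t + (-2*b*Complex.I) * A (n+1) t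
        + (2*b*Complex.I*(k:ℂ) + c) * A n t) t := by
    intro t
    have hs : HasDerivAt (fun s : ℂ => (k:ℂ)+s*Complex.I) Complex.I ((t:ℂ)) := by
      simpa using ((hasDerivAt_id ((t:ℂ))).mul_const Complex.I).const_add (k:ℂ)
    have he : HasDerivAt (fun s : ℂ => b*s^2+c*s+d) (2*b*(t:ℂ)+c) (t:ℂ) := by
      have h1 := (hasDerivAt_pow 2 ((t:ℂ))).const_mul b
      have h2 := (hasDerivAt_id ((t:ℂ))).const_mul c
      have h3 := (h1.add h2).add_const d
      refine h3.congr_deriv ?_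
      simp; ring
    have h4 := ((hs.pow n).mul he.cexp).comp_ofReal
    refine h4.congr_deriv ?_
    symm
    simp only [hA, Pi.pow_apply]
    linear_combination (-2*b*(t:ℂ)*((k:ℂ)+(t:ℂ)*Complex.I)^n
      * Complex.exp (b*(t:ℂ)^2+c*(t:ℂ)+d)) * Complex.I_sq
  have hint : Integrable (fun t => (n:ℂ) * Complex.I * A (n-1) t
      + (-2*b*Complex.I) * A (n+1) t + (2*b*Complex.I*(k:ℂ) + c) * A n t) :=
    (((IA (n-1)).const_mul _).add ((IA (n+1)).const_mul _)).add ((IA n).const_mul _)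
  have h0 := integral_of_hasDerivAt_of_tendsto hD hint
    (hT.mono_left (le_sup_left.trans cocompact_eq_atBot_atTop.ge))
    (hT.mono_left (le_sup_right.trans cocompact_eq_atBot_atTop.ge))
  rw [sub_self] at h0
  have hI12 : Integrable (fun t : ℝ => (n:ℂ) * Complex.I * A (n-1) t
      + (-2*b*Complex.I) * A (n+1) t) :=
    ((IA (n-1)).const_mul _).add ((IA (n+1)).const_mul _)
  rw [← integral_const_mul, ← integral_const_mul, ← integral_const_mul,
    ← integral_add ((IA (n-1)).const_mul _) ((IA (n+1)).const_mul _),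
    ← integral_add hI12 ((IA n).const_mul _)]
  exact h0

lemma base_aux (σ : ℝ) (hσ : 0 < σ) (k : ℝ) (w : ℂ) :
    (∫ t : ℝ, Complex.exp ((-(σ:ℂ)^2/2)*(t:ℂ)^2 + (Complex.I*(w+(σ:ℂ)^2*k))*(t:ℂ)
        + (w*k+(σ:ℂ)^2*k^2/2)))
    = ((Real.sqrt (2*Real.pi) / σ : ℝ) : ℂ) * Complex.exp (-w^2/(2*(σ:ℂ)^2)) := by
  have hσ' : (σ:ℂ) ≠ 0 := Complex.ofReal_ne_zero.2 hσ.ne'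
  have hb : (-(σ:ℂ)^2/2).re < 0 := by
    have : -(σ:ℂ)^2/2 = ((-(σ^2)/2 : ℝ) : ℂ) := by push_cast; ring
    rw [this, Complex.ofReal_re]
    nlinarith
  rw [integral_cexp_quadratic hb]
  have hπσ : ((Real.pi : ℂ) / -(-(σ:ℂ)^2/2)) = ((2*Real.pi/σ^2 : ℝ) : ℂ) := by
    push_cast
    field_simp
  rw [hπσ]
  have h2 : ((2*Real.pi/σ^2 : ℝ):ℂ) ^ (1/2 : ℂ) = ((Real.sqrt (2*Real.pi)/σ : ℝ):ℂ) := by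
    rw [show ((1/2 : ℂ)) = ((1/2 : ℝ) : ℂ) by norm_num,
      ← Complex.ofReal_cpow (by positivity)]
    congr 1
    rw [← Real.sqrt_eq_rpow, Real.sqrt_div (by positivity) (σ^2), Real.sqrt_sq hσ.le]
  have h3 : (w*(k:ℂ)+(σ:ℂ)^2*(k:ℂ)^2/2) - (Complex.I*(w+(σ:ℂ)^2*(k:ℂ)))^2/(4*(-(σ:ℂ)^2/2))
      = -w^2/(2*(σ:ℂ)^2) := by
    have h4 : (σ:ℂ)^2 ≠ 0 := pow_ne_zero _ hσ'
    field_simp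
    linear_combination (4*(w+(k:ℂ)*(σ:ℂ)^2)^2) * Complex.I_sq
  rw [h2, h3]

lemma formula_aux (σ : ℝ) (hσ : 0 < σ) (k : ℝ) (w : ℂ) (n : ℕ) :
    (σ:ℂ)^(n+1) * (∫ t : ℝ, ((k:ℂ)+(t:ℂ)*Complex.I)^n * Complex.exp ((-(σ:ℂ)^2/2)*(t:ℂ)^2
        + (Complex.I*(w+(σ:ℂ)^2*k))*(t:ℂ) + (w*k+(σ:ℂ)^2*k^2/2)))
    = (-1)^n * ((Real.sqrt (2*Real.pi) : ℝ) : ℂ) * Complex.exp (-w^2/(2*(σ:ℂ)^2))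
        * (Polynomial.aeval (w/(σ:ℂ)) (Polynomial.hermite n)) := by
  have hσ' : (σ:ℂ) ≠ 0 := Complex.ofReal_ne_zero.2 hσ.ne'
  have hσ2 : ((σ:ℂ)^2) ≠ 0 := pow_ne_zero _ hσ'
  have hb : (-(σ:ℂ)^2/2).re < 0 := by
    have : -(σ:ℂ)^2/2 = ((-(σ^2)/2 : ℝ) : ℂ) := by push_cast; ring
    rw [this, Complex.ofReal_re]
    nlinarith
  have hrel : ∀ j : ℕ,
      (j:ℂ) * (∫ t : ℝ, ((k:ℂ)+(t:ℂ)*Complex.I)^(j-1) * Complex.exp ((-(σ:ℂ)^2/2)*(t:ℂ)^2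
        + (Complex.I*(w+(σ:ℂ)^2*k))*(t:ℂ) + (w*k+(σ:ℂ)^2*k^2/2)))
      + w * (∫ t : ℝ, ((k:ℂ)+(t:ℂ)*Complex.I)^j * Complex.exp ((-(σ:ℂ)^2/2)*(t:ℂ)^2
        + (Complex.I*(w+(σ:ℂ)^2*k))*(t:ℂ) + (w*k+(σ:ℂ)^2*k^2/2)))
      + (σ:ℂ)^2 * (∫ t : ℝ, ((k:ℂ)+(t:ℂ)*Complex.I)^(j+1) * Complex.exp ((-(σ:ℂ)^2/2)*(t:ℂ)^2
        + (Complex.I*(w+(σ:ℂ)^2*k))*(t:ℂ) + (w*k+(σ:ℂ)^2*k^2/2))) = 0 := by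
    intro j
    have h := rec_aux hb (Complex.I*(w+(σ:ℂ)^2*k)) (w*k+(σ:ℂ)^2*k^2/2) k j
    have h2 : Complex.I * ((j:ℂ) * (∫ t : ℝ, ((k:ℂ)+(t:ℂ)*Complex.I)^(j-1)
        * Complex.exp ((-(σ:ℂ)^2/2)*(t:ℂ)^2
        + (Complex.I*(w+(σ:ℂ)^2*k))*(t:ℂ) + (w*k+(σ:ℂ)^2*k^2/2)))
      + w * (∫ t : ℝ, ((k:ℂ)+(t:ℂ)*Complex.I)^j * Complex.exp ((-(σ:ℂ)^2/2)*(t:ℂ)^2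
        + (Complex.I*(w+(σ:ℂ)^2*k))*(t:ℂ) + (w*k+(σ:ℂ)^2*k^2/2)))
      + (σ:ℂ)^2 * (∫ t : ℝ, ((k:ℂ)+(t:ℂ)*Complex.I)^(j+1) * Complex.exp ((-(σ:ℂ)^2/2)*(t:ℂ)^2
        + (Complex.I*(w+(σ:ℂ)^2*k))*(t:ℂ) + (w*k+(σ:ℂ)^2*k^2/2)))) = 0 := by
      linear_combination h
    exact (mul_eq_zero.mp h2).resolve_left Complex.I_ne_zero
  induction n using Nat.twoStepInduction with
  | zero =>
      have V0 := base_aux σ hσ k w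
      simp only [pow_zero, one_mul, pow_one]
      rw [V0]
      simp only [Polynomial.hermite_zero, map_one, mul_one]
      push_cast
      field_simp
  | one =>
      have h0 := hrel 0
      have V0 := base_aux σ hσ k w
      simp only [Nat.cast_zero, zero_mul, zero_add, pow_zero, one_mul, pow_one] at h0
      rw [V0] at h0
      simp only [pow_one, Polynomial.hermite_one, Polynomial.aeval_X]
      push_cast at h0 ⊢
      linear_combination h0
  | more n ih1 ih2 =>
      have h := hrel (n+1)
      simp only [Nat.add_sub_cancel] at h
      push_cast at h
      have hh : ((σ:ℂ)) * (Polynomial.aeval (w/(σ:ℂ)) (Polynomial.hermite (n+2))) =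
          w * (Polynomial.aeval (w/(σ:ℂ)) (Polynomial.hermite (n+1)))
            - ((n:ℂ)+1) * (σ:ℂ) * (Polynomial.aeval (w/(σ:ℂ)) (Polynomial.hermite n)) := by
        rw [show n+2 = (n+1)+1 from rfl, Polynomial.hermite_succ, hermite_deriv_aux]
        simp only [map_sub, map_mul, map_add, map_natCast, map_one, Polynomial.aeval_X]
        field_simp
      apply mul_left_cancel₀ hσ'
      linear_combination ((σ:ℂ)^(n+2)) * h + (-(((n:ℂ)+1))*(σ:ℂ)) * ih1 + (-w) * ih2
        + (-((-1)^n * ((Real.sqrt (2*Real.pi) : ℝ):ℂ)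
            * Complex.exp (-w^2/(2*(σ:ℂ)^2)))) * hh

/-- For σ > 0, k ∈ ℝ, m ∈ ℕ ∪ {0}, and w ∈ ℂ, the contour integral
(1/(2πi)) ∫_{k-i∞}^{k+i∞} s^m exp(ws + (σ²/2)s²) ds equals
((-1)^m/(√(2π) σ^{m+1})) e^{-w²/(2σ²)} H_m(w/σ), with H_m the m-th
probabilist's Hermite polynomial. -/
theorem contour_integral_hermite (σ : ℝ) (hσ : 0 < σ) (k : ℝ) (m : ℕ) (w : ℂ) :
    (1 / (2 * Real.pi)) * ∫ t : ℝ,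
        (k + t * Complex.I)^m *
          Complex.exp (w * (k + t * Complex.I) + (σ:ℂ)^2 / 2 * (k + t * Complex.I)^2)
      = ((-1)^m / (Real.sqrt (2 * Real.pi) * (σ:ℂ)^(m+1))) *
          Complex.exp (-w^2 / (2 * σ^2)) *
          Polynomial.aeval (w / (σ:ℂ)) (Polynomial.hermite m) := by
  have hσ' : (σ:ℂ) ≠ 0 := Complex.ofReal_ne_zero.2 hσ.ne'
  have hπ : (0:ℝ) < Real.pi := Real.pi_pos
  have hσm : ((σ:ℂ))^(m+1) ≠ 0 := pow_ne_zero _ hσ'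
  have hkey : ∀ t : ℝ, w * ((k:ℂ) + (t:ℂ) * Complex.I)
      + (σ:ℂ)^2 / 2 * ((k:ℂ) + (t:ℂ) * Complex.I)^2
      = (-(σ:ℂ)^2/2)*(t:ℂ)^2 + (Complex.I*(w+(σ:ℂ)^2*k))*(t:ℂ) + (w*k+(σ:ℂ)^2*k^2/2) := by
    intro t
    linear_combination ((σ:ℂ)^2/2*(t:ℂ)^2) * Complex.I_sq
  simp_rw [hkey]
  have FA := formula_aux σ hσ k w m
  set s : ℂ := ((Real.sqrt (2*Real.pi) : ℝ):ℂ) with hsdef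
  set E : ℂ := Complex.exp (-w^2/(2*(σ:ℂ)^2)) with hEdef
  set H : ℂ := (Polynomial.aeval (w/(σ:ℂ)) (Polynomial.hermite m)) with hHdef
  have hs : s * s = 2 * (Real.pi : ℂ) := by
    rw [hsdef, ← Complex.ofReal_mul, Real.mul_self_sqrt (by positivity)]
    push_cast
    ring
  have hsne : s ≠ 0 := by
    rw [hsdef, Complex.ofReal_ne_zero]
    positivity
  have hi : (∫ t : ℝ, ((k:ℂ)+(t:ℂ)*Complex.I)^m * Complex.exp ((-(σ:ℂ)^2/2)*(t:ℂ)^2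
      + (Complex.I*(w+(σ:ℂ)^2*k))*(t:ℂ) + (w*k+(σ:ℂ)^2*k^2/2)))
      = ((-1)^m * s * E * H) / (σ:ℂ)^(m+1) := by
    rw [eq_div_iff hσm]
    linear_combination FA
  rw [hi]
  calc (1/(2*(Real.pi:ℂ))) * (((-1)^m * s * E * H)/(σ:ℂ)^(m+1))
      = ((-1)^m * E * H) * (s / ((s*s) * (σ:ℂ)^(m+1))) := by rw [hs]; ring
    _ = ((-1)^m * E * H) * (1 / (s * (σ:ℂ)^(m+1))) := by
        congr 1
        rw [div_eq_div_iff (mul_ne_zero (mul_ne_zero hsne hsne) hσm)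
          (mul_ne_zero hsne hσm)]
        ring
    _ = ((-1)^m / (s * (σ:ℂ)^(m+1))) * E * H := by ring
end Helpers
end

section
/- For |s| < N+1 (N a natural number), the function γ_N(s) := Γ(s) − Σ_{n=0}^N ((-1)^n/n!) · 1/(s+n) extends to a holomorphic function on the disc {s : |s| < N+1}, and its Taylor coefficients at 0 are a_m = Γ^{(m+1)}(1)/(m+1)! + (-1)^{m+1} Σ_{j=1}^N ((-1)^j/j!) j^{-(m+1)}. -/
open Complex Set Metric Finset

noncomputable def gammaP (N : ℕ) (s : ℂ) : ℂ :=
  ∑ n ∈ Finset.range (N + 1), ((-1) ^ n / (n.factorial : ℂ)) *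
    ∏ j ∈ (Finset.range (N + 1)).erase n, (s + j)

noncomputable def gammaF (N : ℕ) (s : ℂ) : ℂ :=
  Complex.Gamma (s + (N + 1)) - gammaP N s

noncomputable def gammaG (N : ℕ) : ℕ → ℂ → ℂ
  | 0 => gammaF N
  | (k + 1) => dslope (gammaG N k) (-(k : ℂ))

noncomputable def G0 : ℂ → ℂ := fun z => Complex.Gamma (z + 1)

noncomputable def dG : ℕ → ℂ := fun n => iteratedDeriv n Complex.Gamma 1 / n.factorial

noncomputable def wN (N : ℕ) (z : ℂ) : ℂ :=
  dslope G0 0 z - ∑ j ∈ Finset.Icc 1 N, ((-1) ^ j / (j.factorial : ℂ)) * (z + j)⁻¹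

noncomputable def aN (N : ℕ) (m : ℕ) : ℂ :=
  dG (m + 1) + (-1) ^ (m + 1) * ∑ j ∈ Finset.Icc 1 N,
    ((-1) ^ j / (j.factorial : ℂ)) * ((j : ℂ) ^ (m + 1))⁻¹


lemma prod_range_sub_self (k : ℕ) :
    (∏ j ∈ Finset.range k, ((j : ℂ) - k)) = (-1) ^ k * k.factorial := by
  have h1 : ∀ j ∈ Finset.range k, ((j : ℂ) - k) = -(((k - j : ℕ) : ℂ)) := by
    intro j hj
    have hj' := Finset.mem_range.mp hj
    push_cast [Nat.cast_sub hj'.le]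
    ring
  rw [Finset.prod_congr rfl h1]
  have h2 : ∀ j ∈ Finset.range k, -(((k - j : ℕ) : ℂ)) = (-1) * ((k - j : ℕ) : ℂ) := by
    intro j _; ring
  rw [Finset.prod_congr rfl h2, Finset.prod_mul_distrib, Finset.prod_const, Finset.card_range]
  congr 1
  rw [← Nat.cast_prod]
  norm_cast
  have h3 : ∀ j ∈ Finset.range k, k - j = (fun i => i + 1) (k - 1 - j) := by
    intro j hj; have := Finset.mem_range.mp hj; simp only; omega
  rw [Finset.prod_congr rfl h3, Finset.prod_range_reflect (fun i => i + 1) k,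
    Finset.prod_range_add_one_eq_factorial]

lemma prod_Ico_sub {N k : ℕ} (hk : k ≤ N) :
    (∏ j ∈ Finset.Ico (k + 1) (N + 1), ((j : ℂ) - k)) = ((N - k).factorial : ℂ) := by
  rw [Finset.prod_Ico_eq_prod_range, Nat.succ_sub_succ]
  have h1 : ∀ i ∈ Finset.range (N - k), (((k + 1 + i : ℕ)) : ℂ) - k = ((i + 1 : ℕ) : ℂ) := by
    intro i _; push_cast; ring
  rw [Finset.prod_congr rfl h1, ← Nat.cast_prod, Finset.prod_range_add_one_eq_factorial]

lemma erase_range_split {N k : ℕ} (hk : k ≤ N) :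
    (Finset.range (N + 1)).erase k = Finset.range k ∪ Finset.Ico (k + 1) (N + 1) := by
  ext j
  simp only [Finset.mem_erase, Finset.mem_range, Finset.mem_union, Finset.mem_Ico]
  omega

lemma prod_erase_eval {N k : ℕ} (hk : k ≤ N) :
    (∏ j ∈ (Finset.range (N + 1)).erase k, (-(k : ℂ) + j))
      = (-1) ^ k * k.factorial * ((N - k).factorial : ℂ) := by
  have h0 : ∀ j ∈ (Finset.range (N + 1)).erase k, (-(k : ℂ) + j) = ((j : ℂ) - k) := by
    intro j _; ring
  rw [Finset.prod_congr rfl h0, erase_range_split hk,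
    Finset.prod_union (by
      rw [Finset.disjoint_left]
      intro j hj hj'
      simp only [Finset.mem_range] at hj
      simp only [Finset.mem_Ico] at hj'
      omega),
    prod_range_sub_self, prod_Ico_sub hk]

lemma gammaF_zero {N k : ℕ} (hk : k ≤ N) : gammaF N (-(k : ℂ)) = 0 := by
  unfold gammaF gammaP
  have h1 : -(k : ℂ) + ((N : ℂ) + 1) = ((N - k : ℕ) : ℂ) + 1 := by
    push_cast [Nat.cast_sub hk]; ring
  rw [h1, Complex.Gamma_nat_eq_factorial]
  rw [sub_eq_zero]
  rw [Finset.sum_eq_single k]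
  · rw [prod_erase_eval hk]
    have hfac : ((k.factorial : ℂ)) ≠ 0 := Nat.cast_ne_zero.mpr k.factorial_ne_zero
    have hsq : ((-1 : ℂ)) ^ k * (-1) ^ k = 1 := by
      rw [← pow_add, ← two_mul, pow_mul]; norm_num
    field_simp
    linear_combination (-(((N-k).factorial : ℂ))) * hsq
  · intro n hn hne
    have hkmem : k ∈ (Finset.range (N + 1)).erase n :=
      Finset.mem_erase.mpr ⟨fun h => hne h.symm, Finset.mem_range.mpr (Nat.lt_succ_of_le hk)⟩
    rw [Finset.prod_eq_zero hkmem (by ring), mul_zero]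
  · intro h
    exact absurd (Finset.mem_range.mpr (Nat.lt_succ_of_le hk)) h

lemma differentiableAt_Gamma_of_re_pos {w : ℂ} (hw : 0 < w.re) :
    DifferentiableAt ℂ Complex.Gamma w := by
  refine Complex.differentiableAt_Gamma w fun m h => ?_
  rw [h] at hw
  simp only [Complex.neg_re, Complex.natCast_re] at hw
  have : (0:ℝ) ≤ m := Nat.cast_nonneg m
  linarith

lemma gammaF_diff (N : ℕ) : DifferentiableOn ℂ (gammaF N) (ball (0 : ℂ) (N + 1)) := by
  intro s hs
  have habs : ‖s‖ < N + 1 := by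
    simpa using mem_ball_zero_iff.mp hs
  have hre : 0 < (s + ((N : ℂ) + 1)).re := by
    have h1 : |s.re| ≤ ‖s‖ := Complex.abs_re_le_norm s
    have h2 := abs_lt.mp (lt_of_le_of_lt h1 habs)
    simp only [Complex.add_re, Complex.one_re, Complex.natCast_re, Complex.ofReal_re]
    push_cast
    linarith [h2.1]
  have hGamma : DifferentiableAt ℂ (fun z : ℂ => Complex.Gamma (z + ((N : ℂ) + 1))) s := by
    exact (differentiableAt_Gamma_of_re_pos hre).comp s (differentiableAt_id.add_const _)
  have hP : DifferentiableAt ℂ (gammaP N) s := by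
    unfold gammaP
    apply DifferentiableAt.fun_sum
    intro n _
    apply DifferentiableAt.const_mul
    apply DifferentiableAt.fun_finsetProd
    intro j _
    exact differentiableAt_id.add_const _
  exact (hGamma.sub hP).differentiableWithinAt

lemma Gamma_shift (s : ℂ) : ∀ k : ℕ, (∀ j, j < k → s ≠ -(j : ℂ)) →
    Complex.Gamma (s + k) = Complex.Gamma s * ∏ j ∈ Finset.range k, (s + j) := by
  intro k
  induction k with
  | zero => intro _; simp
  | succ k ih =>
      intro hs
      have h1 : s + ((k + 1 : ℕ) : ℂ) = (s + k) + 1 := by push_cast; ring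
      have hne : s + (k : ℂ) ≠ 0 := by
        intro h0
        exact hs k (Nat.lt_succ_self k) (eq_neg_of_add_eq_zero_left h0)
      rw [h1, Complex.Gamma_add_one _ hne, ih (fun j hj => hs j (Nat.lt_succ_of_lt hj)),
        Finset.prod_range_succ]
      ring

lemma dslope_diffOn {f : ℂ → ℂ} {s : Set ℂ} (hs : IsOpen s)
    (hf : DifferentiableOn ℂ f s) {a : ℂ} (ha : a ∈ s) :
    DifferentiableOn ℂ (dslope f a) s := by
  intro x hx
  rcases eq_or_ne x a with rfl | h
  · obtain ⟨p, hp⟩ := hf.analyticAt (hs.mem_nhds hx)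
    exact hp.has_fpower_series_dslope_fslope.analyticAt.differentiableAt.differentiableWithinAt
  · exact ((differentiableAt_dslope_of_ne h).2
      ((hf x hx).differentiableAt (hs.mem_nhds hx))).differentiableWithinAt

lemma gammaG_diff (N : ℕ) : ∀ k, k ≤ N + 1 →
    DifferentiableOn ℂ (gammaG N k) (ball (0 : ℂ) (N + 1)) := by
  intro k
  induction k with
  | zero => intro _; exact gammaF_diff N
  | succ k ih =>
      intro hk
      have hmem : -(k : ℂ) ∈ ball (0 : ℂ) (N + 1) := by
        simp only [mem_ball, dist_zero_right, norm_neg, Complex.norm_natCast]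
        exact_mod_cast Nat.lt_succ_of_le (Nat.lt_succ_iff.mp hk)
      exact dslope_diffOn isOpen_ball (ih (Nat.le_of_succ_le hk)) hmem

lemma gammaG_eq (N : ℕ) : ∀ k, k ≤ N + 1 → ∀ s : ℂ, (∀ j, j < k → s ≠ -(j : ℂ)) →
    gammaG N k s = gammaF N s / ∏ j ∈ Finset.range k, (s + j) := by
  intro k
  induction k with
  | zero => intro _ s _; simp [gammaG]
  | succ k ih =>
      intro hk s hs
      have hksucc : k ≤ N + 1 := Nat.le_of_succ_le hk
      have hkN : k ≤ N := Nat.lt_succ_iff.mp hk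
      have hsk : s ≠ -(k : ℂ) := hs k (Nat.lt_succ_self k)
      have hGk0 : gammaG N k (-(k : ℂ)) = 0 := by
        rw [ih hksucc _ (fun j hj heq => by
          have : (k : ℂ) = j := neg_inj.mp heq
          have : k = j := Nat.cast_injective this
          omega)]
        rw [gammaF_zero hkN, zero_div]
      show dslope (gammaG N k) (-(k : ℂ)) s = _
      rw [dslope_of_ne _ hsk, slope_def_field, hGk0,
        ih hksucc s (fun j hj => hs j (Nat.lt_succ_of_lt hj)), sub_zero,
        Finset.prod_range_succ, sub_neg_eq_add, div_div]

lemma gammaG_repr (N : ℕ) (s : ℂ) (hsn : ∀ n : ℕ, n ≤ N → s ≠ -(n : ℂ)) :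
    gammaG N (N + 1) s = Complex.Gamma s -
      ∑ n ∈ Finset.range (N + 1), ((-1) ^ n / (n.factorial : ℂ)) * (s + n)⁻¹ := by
  have hs' : ∀ j, j < N + 1 → s ≠ -(j : ℂ) := fun j hj => hsn j (Nat.lt_succ_iff.mp hj)
  have hfac : ∀ j ∈ Finset.range (N + 1), s + (j : ℂ) ≠ 0 := fun j hj h0 =>
    hs' j (Finset.mem_range.mp hj) (eq_neg_of_add_eq_zero_left h0)
  have hQ : (∏ j ∈ Finset.range (N + 1), (s + (j : ℂ))) ≠ 0 :=
    Finset.prod_ne_zero_iff.mpr hfac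
  rw [gammaG_eq N (N + 1) le_rfl s hs', div_eq_iff hQ]
  unfold gammaF
  have hcast : s + ((N : ℂ) + 1) = s + ((N + 1 : ℕ) : ℂ) := by push_cast; ring
  rw [hcast, Gamma_shift s (N + 1) hs', sub_mul, Finset.sum_mul]
  congr 1
  unfold gammaP
  refine Finset.sum_congr rfl fun n hn => ?_
  have hinv : (s + (n : ℂ))⁻¹ * (∏ j ∈ Finset.range (N + 1), (s + (j : ℂ)))
      = ∏ j ∈ (Finset.range (N + 1)).erase n, (s + j) := by
    rw [← Finset.prod_erase_mul _ _ hn, mul_comm ((s + (n:ℂ))⁻¹), mul_assoc,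
      mul_inv_cancel₀ (hfac n hn), mul_one]
  rw [mul_assoc, hinv]

lemma coeff_unique {f : ℂ → ℂ} {a b : ℕ → ℂ}
    (ha : ∀ᶠ z in nhds (0 : ℂ), HasSum (fun n => a n * z ^ n) (f z))
    (hb : ∀ᶠ z in nhds (0 : ℂ), HasSum (fun n => b n * z ^ n) (f z)) : a = b := by
  have key : ∀ c : ℕ → ℂ, (∀ᶠ z in nhds (0 : ℂ), HasSum (fun n => c n * z ^ n) (f z)) →
      HasFPowerSeriesAt f (FormalMultilinearSeries.ofScalars ℂ c) 0 := by
    intro c hc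
    rw [hasFPowerSeriesAt_iff]
    filter_upwards [hc] with z hz
    have hcoeff : ∀ n, (FormalMultilinearSeries.ofScalars ℂ c).coeff n = c n := by
      intro n
      simp [FormalMultilinearSeries.coeff, FormalMultilinearSeries.ofScalars, List.prod_ofFn]
    simp only [hcoeff, smul_eq_mul, zero_add]
    exact hz.congr_fun fun n => mul_comm _ _
  have hpq := (key a ha).eq_formalMultilinearSeries (key b hb)
  funext n
  have : (FormalMultilinearSeries.ofScalars ℂ a).coeff n
      = (FormalMultilinearSeries.ofScalars ℂ b).coeff n := by rw [hpq]
  simpa [FormalMultilinearSeries.coeff, FormalMultilinearSeries.ofScalars,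
    List.prod_ofFn] using this


lemma geom_hasSum {n : ℕ} (hn : 1 ≤ n) {z : ℂ} (hz : ‖z‖ < 1) :
    HasSum (fun m => (-1) ^ m * (((n : ℂ) ^ (m + 1))⁻¹) * z ^ m) ((z + n)⁻¹) := by
  have hn0 : (n : ℂ) ≠ 0 := Nat.cast_ne_zero.mpr (by omega)
  have hn1 : (1 : ℝ) ≤ (n : ℝ) := by exact_mod_cast hn
  have hx : ‖-z / n‖ < 1 := by
    rw [norm_div, norm_neg, Complex.norm_natCast]
    rw [div_lt_one (by linarith)]
    linarith
  have h := (hasSum_geometric_of_norm_lt_one hx).mul_right ((n : ℂ))⁻¹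
  have hval : (1 - -z / n)⁻¹ * (n : ℂ)⁻¹ = (z + n)⁻¹ := by
    rw [← mul_inv]
    congr 1
    field_simp
    ring
  rw [hval] at h
  refine h.congr_fun fun m => ?_
  rw [div_pow, neg_pow, pow_succ, mul_inv, div_eq_mul_inv]
  ring

lemma hG0diff : DifferentiableOn ℂ G0 (ball (0 : ℂ) 1) := by
  intro z hz
  have habs : ‖z‖ < 1 := by
    simpa using mem_ball_zero_iff.mp hz
  have hre : 0 < (z + 1).re := by
    have h1 : |z.re| ≤ ‖z‖ := Complex.abs_re_le_norm z
    have h2 := abs_lt.mp (lt_of_le_of_lt h1 habs)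
    simp only [Complex.add_re, Complex.one_re]
    linarith [h2.1]
  exact ((differentiableAt_Gamma_of_re_pos hre).comp z
    (differentiableAt_id.add_const _)).differentiableWithinAt


lemma hG0sum {z : ℂ} (hz : z ∈ ball (0 : ℂ) 1) :
    HasSum (fun n => dG n * z ^ n) (G0 z) := by
  have h := Complex.hasSum_taylorSeries_on_ball hG0diff hz
  refine h.congr_fun fun n => ?_
  have hiter : iteratedDeriv n G0 0 = iteratedDeriv n Complex.Gamma 1 := by
    have := iteratedDeriv_comp_add_const n Complex.Gamma 1
    have h2 : G0 = fun z => Complex.Gamma (z + 1) := rfl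
    rw [h2, this]
    norm_num
  rw [hiter]
  simp only [dG, smul_eq_mul, sub_zero, div_eq_mul_inv]
  ring

lemma hdsl {z : ℂ} (hz : z ∈ ball (0 : ℂ) 1) :
    HasSum (fun m => dG (m + 1) * z ^ m) (dslope G0 0 z) := by
  rcases eq_or_ne z 0 with rfl | hz0
  · have hs0 := hasSum_single (f := fun m => dG (m + 1) * (0 : ℂ) ^ m) 0
      (fun m hm => by simp [zero_pow hm])
    have hval : dG 1 * (0 : ℂ) ^ 0 = dslope G0 0 0 := by
      rw [dslope_same]
      have h1 : deriv G0 0 = iteratedDeriv 1 G0 0 := by rw [iteratedDeriv_one]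
      have h2 : iteratedDeriv 1 G0 0 = iteratedDeriv 1 Complex.Gamma 1 := by
        have := iteratedDeriv_comp_add_const 1 Complex.Gamma 1
        have hg : G0 = fun z => Complex.Gamma (z + 1) := rfl
        rw [hg, this]; norm_num
      simp [dG, h1, h2]
    rwa [show dG (0 + 1) * (0 : ℂ) ^ 0 = dslope G0 0 0 from by simpa using hval]
      at hs0
  · have h1 := hG0sum hz
    have hG00 : G0 (0:ℂ) = 1 := by
      simp [G0, Complex.Gamma_one]
    have h2 : HasSum (fun m => dG (m + 1) * z ^ (m + 1)) (G0 z - 1) := by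
      refine (hasSum_nat_add_iff (f := fun n => dG n * z ^ n) 1).mpr ?_
      have hval : G0 z - 1 + ∑ i ∈ Finset.range 1, dG i * z ^ i = G0 z := by
        simp [dG, Complex.Gamma_one]
      rwa [hval]
    have h3 := h2.mul_right z⁻¹
    have hval : (G0 z - 1) * z⁻¹ = dslope G0 0 z := by
      rw [dslope_of_ne _ hz0, slope_def_field, hG00, sub_zero, div_eq_mul_inv]
    rw [hval] at h3
    refine h3.congr_fun fun m => ?_
    rw [pow_succ, ← mul_assoc, mul_assoc _ z z⁻¹, mul_inv_cancel₀ hz0, mul_one]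

lemma hwsum (N : ℕ) {z : ℂ} (hz : z ∈ ball (0 : ℂ) 1) :
    HasSum (fun m => aN N m * z ^ m) (wN N z) := by
  have hznorm : ‖z‖ < 1 := mem_ball_zero_iff.mp hz
  have h2 : HasSum
      (fun m => ∑ j ∈ Finset.Icc 1 N,
        ((-1) ^ j / (j.factorial : ℂ)) * ((-1) ^ m * (((j : ℂ) ^ (m + 1))⁻¹) * z ^ m))
      (∑ j ∈ Finset.Icc 1 N, ((-1) ^ j / (j.factorial : ℂ)) * (z + j)⁻¹) :=
    hasSum_sum fun j hj => (geom_hasSum (Finset.mem_Icc.mp hj).1 hznorm).mul_left _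
  have h3 := (hdsl hz).sub h2
  refine h3.congr_fun fun m => ?_
  show aN N m * z ^ m = _
  rw [aN, add_mul]
  congr 1
  have hsum : ∑ j ∈ Finset.Icc 1 N,
      ((-1) ^ j / (j.factorial : ℂ)) * ((-1) ^ m * (((j : ℂ) ^ (m + 1))⁻¹) * z ^ m)
      = (-1) ^ m * z ^ m * ∑ j ∈ Finset.Icc 1 N,
          ((-1) ^ j / (j.factorial : ℂ)) * ((j : ℂ) ^ (m + 1))⁻¹ := by
    rw [Finset.mul_sum]
    exact Finset.sum_congr rfl fun j _ => by ring
  rw [hsum, pow_succ]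
  ring

lemma hgw' (N : ℕ) {z : ℂ} (hz : z ∈ ball (0 : ℂ) 1) (hz0 : z ≠ 0) :
    gammaG N (N + 1) z = wN N z := by
  have hznorm : ‖z‖ < 1 := mem_ball_zero_iff.mp hz
  have hzn : ∀ n : ℕ, n ≤ N → z ≠ -(n : ℂ) := by
    intro n _ h
    rcases Nat.eq_zero_or_pos n with rfl | hpos
    · simp at h; exact hz0 h
    · rw [h, norm_neg, Complex.norm_natCast] at hznorm
      have : (1 : ℝ) ≤ n := by exact_mod_cast hpos
      linarith
  rw [gammaG_repr N z hzn]
  have hsplit : Finset.range (N + 1) = insert 0 (Finset.Icc 1 N) := by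
    ext j; simp; omega
  rw [hsplit, Finset.sum_insert (by simp)]
  have hdval : dslope G0 0 z = Complex.Gamma z - z⁻¹ := by
    rw [dslope_of_ne _ hz0, slope_def_field]
    show (Complex.Gamma (z + 1) - Complex.Gamma (0 + 1)) / (z - 0) = _
    rw [zero_add, Complex.Gamma_one, sub_zero, Complex.Gamma_add_one z hz0, sub_div,
      mul_div_cancel_left₀ _ hz0, one_div]
  rw [wN, hdval]
  simp only [pow_zero, Nat.factorial_zero, Nat.cast_one, Nat.cast_zero, add_zero, one_div,
    one_mul]
  ring

lemma hgw0 (N : ℕ) : gammaG N (N + 1) 0 = wN N 0 := by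
  have h0mem : (0 : ℂ) ∈ ball (0 : ℂ) ((N : ℝ) + 1) := mem_ball_self (by positivity)
  have hgc : ContinuousAt (gammaG N (N + 1)) 0 :=
    ((gammaG_diff N (N + 1) le_rfl).differentiableAt (isOpen_ball.mem_nhds h0mem)).continuousAt
  have hwc : ContinuousAt (wN N) 0 := by
    have h1 : ContinuousAt (dslope G0 0) 0 :=
      continuousAt_dslope_same.2 (hG0diff.differentiableAt
        (isOpen_ball.mem_nhds (mem_ball_self one_pos)))
    have h2 : ContinuousAt (fun z : ℂ => ∑ j ∈ Finset.Icc 1 N,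
        ((-1) ^ j / (j.factorial : ℂ)) * (z + j)⁻¹) 0 := by
      have hdiff : DifferentiableAt ℂ (fun z : ℂ => ∑ j ∈ Finset.Icc 1 N,
          ((-1) ^ j / (j.factorial : ℂ)) * (z + j)⁻¹) 0 := by
        apply DifferentiableAt.fun_sum
        intro j hj
        have hne : (0 : ℂ) + (j : ℂ) ≠ 0 := by
          rw [zero_add]
          exact Nat.cast_ne_zero.mpr (by have := (Finset.mem_Icc.mp hj).1; omega)
        have hd : DifferentiableAt ℂ (fun z : ℂ => (z + (j : ℂ))⁻¹) 0 :=
          (differentiableAt_id.add_const _).inv hne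
        exact hd.const_mul _
      exact hdiff.continuousAt
    exact h1.sub h2
  have h1 : Filter.Tendsto (gammaG N (N + 1)) (nhdsWithin 0 {(0 : ℂ)}ᶜ)
      (nhds (gammaG N (N + 1) 0)) := hgc.tendsto.mono_left nhdsWithin_le_nhds
  have h2 : Filter.Tendsto (gammaG N (N + 1)) (nhdsWithin 0 {(0 : ℂ)}ᶜ)
      (nhds (wN N 0)) := by
    refine Filter.Tendsto.congr' ?_ (hwc.tendsto.mono_left nhdsWithin_le_nhds)
    filter_upwards [self_mem_nhdsWithin,
      mem_nhdsWithin_of_mem_nhds (ball_mem_nhds (0 : ℂ) one_pos)] with x hx1 hx2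
    exact (hgw' N hx2 hx1).symm
  exact tendsto_nhds_unique h1 h2

lemma hgw (N : ℕ) {z : ℂ} (hz : z ∈ ball (0 : ℂ) 1) : gammaG N (N + 1) z = wN N z := by
  rcases eq_or_ne z 0 with rfl | h
  exacts [hgw0 N, hgw' N hz h]

/-- γ_N(s) := Γ(s) − Σ_{n=0}^N ((-1)^n/n!) (s+n)⁻¹ extends to a holomorphic
function on the disc |s| < N+1, whose Taylor coefficients at 0 are
a_m = Γ^{(m+1)}(1)/(m+1)! + (-1)^{m+1} Σ_{j=1}^N ((-1)^j/j!) j^{-(m+1)}. -/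
theorem gammaN_holomorphic_taylor (N : ℕ) :
    ∃ g : ℂ → ℂ,
      DifferentiableOn ℂ g (ball (0:ℂ) (N + 1)) ∧
      (∀ s ∈ ball (0:ℂ) (N + 1), (∀ n : ℕ, n ≤ N → s ≠ -(n:ℂ)) →
        g s = Complex.Gamma s -
          ∑ n ∈ Finset.range (N + 1), ((-1)^n / (n.factorial : ℂ)) * (s + n)⁻¹) ∧
      ∀ m : ℕ,
        iteratedDeriv m g 0 / (m.factorial : ℂ)
          = iteratedDeriv (m + 1) Complex.Gamma 1 / ((m + 1).factorial : ℂ)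
            + (-1)^(m + 1) * ∑ j ∈ Finset.Icc 1 N,
                ((-1)^j / (j.factorial : ℂ)) * ((j:ℂ)^(m + 1))⁻¹ := by
  refine ⟨gammaG N (N + 1), gammaG_diff N (N + 1) le_rfl,
    fun s _ hsn => gammaG_repr N s hsn, ?_⟩
  have hbser : ∀ᶠ z in nhds (0 : ℂ),
      HasSum (fun n => iteratedDeriv n (gammaG N (N + 1)) 0 / (n.factorial : ℂ) * z ^ n)
        (gammaG N (N + 1) z) := by
    filter_upwards [ball_mem_nhds (0 : ℂ) (by positivity : (0:ℝ) < (N:ℝ) + 1)] with z hz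
    have h := Complex.hasSum_taylorSeries_on_ball (gammaG_diff N (N + 1) le_rfl) hz
    refine h.congr_fun fun n => ?_
    simp only [smul_eq_mul, sub_zero, div_eq_mul_inv]
    ring
  have haser : ∀ᶠ z in nhds (0 : ℂ),
      HasSum (fun n => aN N n * z ^ n) (gammaG N (N + 1) z) := by
    filter_upwards [ball_mem_nhds (0 : ℂ) one_pos] with z hz
    rw [hgw N hz]
    exact hwsum N hz
  intro m
  have h := congrFun (coeff_unique hbser haser) m
  simpa [aN, dG] using h
end
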